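/- arXiv:1712.09225 — 5 statements merged into one kernel-verified Lean document; each statement's English description precedes it below -/
import Mathlib

section
/- Let α > 0 and let Z be a random vector with values in [0,∞)^d. Define the measure Λ on [0,∞)^d \ {0} by Λ(A) = ∫_0^∞ P(uZ ∈ A) α u^{-α-1} du. Then for every x ∈ [0,∞)^d \ {0}, Λ([0,x]^c) = E[ max_{1≤i≤d} (Z_i/x_i)^α ], where [0,x]^c = [0,∞)^d \ ([0,x_1]×···×[0,x_d]). -/
open MeasureTheory Set ENNReal

lemma lint_tail (α : ℝ) (hα : 0 < α) (t : ℝ) (ht : 0 < t) :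
    ∫⁻ u in Set.Ioi t, ENNReal.ofReal (α * u ^ (-α - 1)) = ENNReal.ofReal (t ^ (-α)) := by
  have hint : IntegrableOn (fun u : ℝ => α * u ^ (-α - 1)) (Set.Ioi t) :=
    (integrableOn_Ioi_rpow_of_lt (by linarith) ht).const_mul α
  rw [← ofReal_integral_eq_lintegral_ofReal hint]
  · congr 1
    rw [integral_const_mul, integral_Ioi_rpow_of_lt (by linarith) ht]
    have : -α - 1 + 1 = -α := by ring
    rw [this]
    field_simp
  · filter_upwards [ae_restrict_mem measurableSet_Ioi] with u hu
    have hu0 : 0 < u := ht.trans hu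
    positivity

lemma lint_tail_top (α : ℝ) (hα : 0 < α) :
    ∫⁻ u in Set.Ioi (0 : ℝ), ENNReal.ofReal (α * u ^ (-α - 1)) = ⊤ := by
  refine ENNReal.eq_top_of_forall_nnreal_le fun r => ?_
  set c : ℝ := (r : ℝ) + 1 with hc
  have hc0 : 0 < c := by positivity
  set t : ℝ := c ^ (-(1 : ℝ) / α) with htdef
  have ht : 0 < t := Real.rpow_pos_of_pos hc0 _
  have htα : t ^ (-α) = c := by
    rw [htdef, ← Real.rpow_mul hc0.le]
    have : -(1 : ℝ) / α * -α = 1 := by field_simp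
    rw [this, Real.rpow_one]
  have h1 : (r : ℝ≥0∞) ≤ ENNReal.ofReal (t ^ (-α)) := by
    rw [htα, hc, ENNReal.ofReal_add r.coe_nonneg (by norm_num)]
    simp [ENNReal.ofReal_coe_nnreal]
  refine h1.trans ?_
  rw [← lint_tail α hα t ht]
  exact lintegral_mono_set (Set.Ioi_subset_Ioi ht.le)

lemma inner_eq {d : ℕ} (α : ℝ) (hα : 0 < α) (x z : Fin d → ℝ) (hx : ∀ i, 0 ≤ x i)
    (hz : ∀ i, 0 ≤ z i) :
    ∫⁻ u in Set.Ioi (0 : ℝ),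
        {u : ℝ | ∃ i, x i < u * z i}.indicator
          (fun u => ENNReal.ofReal (α * u ^ (-α - 1))) u
      = ⨆ i, (ENNReal.ofReal (z i) / ENNReal.ofReal (x i)) ^ α := by
  by_cases hA : ∃ i, x i = 0 ∧ 0 < z i
  · obtain ⟨i, hxi, hzi⟩ := hA
    have hset : ∀ u ∈ Set.Ioi (0 : ℝ),
        {u : ℝ | ∃ i, x i < u * z i}.indicator
          (fun u => ENNReal.ofReal (α * u ^ (-α - 1))) u
        = ENNReal.ofReal (α * u ^ (-α - 1)) := by
      intro u hu
      apply Set.indicator_of_mem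
      exact ⟨i, by rw [hxi]; exact mul_pos hu (by exact hzi)⟩
    rw [setLIntegral_congr_fun measurableSet_Ioi hset,
      lint_tail_top α hα]
    have hterm : (ENNReal.ofReal (z i) / ENNReal.ofReal (x i)) ^ α = ⊤ := by
      rw [hxi, ENNReal.ofReal_zero, ENNReal.div_zero (by simp [ENNReal.ofReal_eq_zero]; linarith),
        ENNReal.top_rpow_of_pos hα]
    exact le_antisymm (hterm ▸ le_iSup (fun i => (ENNReal.ofReal (z i) / ENNReal.ofReal (x i)) ^ α) i) le_top
  · push_neg at hA
    have hz0 : ∀ i, x i = 0 → z i = 0 := fun i h => le_antisymm (hA i h) (hz i)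
    by_cases hB : ∃ i, 0 < z i
    · obtain ⟨j, hj⟩ := hB
      have hxpos : ∀ i, 0 < z i → 0 < x i := by
        intro i hzi
        by_contra hxi
        push_neg at hxi
        have hx0' : x i = 0 := le_antisymm hxi (hx i)
        rw [hz0 i hx0'] at hzi
        exact lt_irrefl 0 hzi
      set F : Finset (Fin d) := Finset.univ.filter (fun i => 0 < z i) with hF
      have hFne : F.Nonempty := ⟨j, by simp [hF, hj]⟩
      set t : ℝ := F.inf' hFne (fun i => x i / z i) with htdef
      have ht : 0 < t := by
        rw [htdef, Finset.lt_inf'_iff]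
        intro i hi
        have hzi : 0 < z i := by simpa [hF] using hi
        exact div_pos (hxpos i hzi) hzi
      -- set identification
      have hset : ∀ u ∈ Set.Ioi (0 : ℝ),
          {u : ℝ | ∃ i, x i < u * z i}.indicator
            (fun u => ENNReal.ofReal (α * u ^ (-α - 1))) u
          = (Set.Ioi t).indicator (fun u => ENNReal.ofReal (α * u ^ (-α - 1))) u := by
        intro u hu
        have : u ∈ {u : ℝ | ∃ i, x i < u * z i} ↔ u ∈ Set.Ioi t := by
          simp only [Set.mem_setOf_eq, Set.mem_Ioi]
          constructor
          · rintro ⟨i, hi⟩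
            have hzi : 0 < z i := by
              rcases (hz i).lt_or_eq with h | h
              · exact h
              · exfalso; rw [← h, mul_zero] at hi; exact absurd hi (not_lt.2 (hx i))
            have h1 : t ≤ x i / z i := Finset.inf'_le _ (by simp [hF, hzi])
            have h2 : x i / z i < u := (div_lt_iff₀ hzi).2 (by linarith [hi])
            linarith
          · intro htu
            obtain ⟨i, hiF, hti⟩ := F.exists_mem_eq_inf' hFne (fun i => x i / z i)
            have hzi : 0 < z i := by simpa [hF] using hiF
            refine ⟨i, ?_⟩
            rw [← htdef] at hti
            have : x i / z i < u := by rw [← hti]; exact htu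
            calc x i = (x i / z i) * z i := by field_simp
              _ < u * z i := by exact mul_lt_mul_of_pos_right this hzi
          
        by_cases hmem : u ∈ {u : ℝ | ∃ i, x i < u * z i}
        · rw [Set.indicator_of_mem hmem, Set.indicator_of_mem (this.1 hmem)]
        · rw [Set.indicator_of_notMem hmem, Set.indicator_of_notMem (fun h => hmem (this.2 h))]
      rw [setLIntegral_congr_fun measurableSet_Ioi hset]
      rw [lintegral_indicator measurableSet_Ioi, Measure.restrict_restrict measurableSet_Ioi,
        Set.inter_eq_left.2 (Set.Ioi_subset_Ioi ht.le), lint_tail α hα t ht]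
      -- now the sup computation
      obtain ⟨i0, hi0F, hti0⟩ := F.exists_mem_eq_inf' hFne (fun i => x i / z i)
      rw [← htdef] at hti0
      have hzi0 : 0 < z i0 := by simpa [hF] using hi0F
      have hxi0 : 0 < x i0 := hxpos i0 hzi0
      apply le_antisymm
      · have : ENNReal.ofReal (t ^ (-α))
            = (ENNReal.ofReal (z i0) / ENNReal.ofReal (x i0)) ^ α := by
          rw [← ENNReal.ofReal_div_of_pos hxi0, ENNReal.ofReal_rpow_of_nonneg
            (div_nonneg (hz i0) (hx i0)) hα.le]
          congr 1
          rw [hti0, Real.rpow_neg (div_nonneg hxi0.le hzi0.le),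
            ← Real.inv_rpow (div_nonneg hxi0.le hzi0.le), inv_div]
        rw [this]
        exact le_iSup (fun i => (ENNReal.ofReal (z i) / ENNReal.ofReal (x i)) ^ α) i0
      · refine iSup_le fun i => ?_
        rcases (hz i).lt_or_eq with hzi | hzi
        · have hxi : 0 < x i := hxpos i hzi
          have h1 : t ≤ x i / z i := Finset.inf'_le _ (by simp [hF, hzi])
          have h2 : z i / x i ≤ t⁻¹ := by
            have := inv_anti₀ ht h1
            rwa [inv_div] at this
          rw [← ENNReal.ofReal_div_of_pos hxi, ENNReal.ofReal_rpow_of_nonneg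
            (div_nonneg (hz i) (hx i)) hα.le]
          apply ENNReal.ofReal_le_ofReal
          rw [Real.rpow_neg ht.le, ← Real.inv_rpow ht.le]
          exact Real.rpow_le_rpow (div_nonneg (hz i) (hx i)) h2 hα.le
        · rw [← hzi]
          simp [ENNReal.zero_rpow_of_pos hα]
    · push_neg at hB
      have hzall : ∀ i, z i = 0 := fun i => le_antisymm (hB i) (hz i)
      have hset : ∀ u ∈ Set.Ioi (0 : ℝ),
          {u : ℝ | ∃ i, x i < u * z i}.indicator
            (fun u => ENNReal.ofReal (α * u ^ (-α - 1))) u = 0 := by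
        intro u hu
        apply Set.indicator_of_notMem
        rintro ⟨i, hi⟩
        rw [hzall i, mul_zero] at hi
        exact absurd hi (not_lt.2 (hx i))
      rw [setLIntegral_congr_fun measurableSet_Ioi hset,
        lintegral_zero]
      symm
      simp only [hzall, ENNReal.ofReal_zero, ENNReal.zero_div,
        ENNReal.zero_rpow_of_pos hα]
      exact iSup_eq_zero.2 fun i => rfl

/-- For a nonnegative random vector `Z` and `α > 0`, the measure
`Λ(A) = ∫_0^∞ P(uZ ∈ A) α u^{-α-1} du` satisfies
`Λ([0,x]^c) = E[max_i (Z_i/x_i)^α]` for every `x ∈ [0,∞)^d \ {0}`. -/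
theorem Lambda_tail_function
    {Ω : Type*} [MeasurableSpace Ω] (μ : Measure Ω) [IsProbabilityMeasure μ]
    {d : ℕ} (hd : 0 < d) (Z : Ω → Fin d → ℝ) (hZ : Measurable Z)
    (hZnn : ∀ ω i, 0 ≤ Z ω i) (α : ℝ) (hα : 0 < α)
    (x : Fin d → ℝ) (hx : ∀ i, 0 ≤ x i) (hx0 : x ≠ 0) :
    ∫⁻ u in Set.Ioi (0 : ℝ),
        μ {ω | ∃ i, x i < u * Z ω i} * ENNReal.ofReal (α * u ^ (-α - 1)) =
      ∫⁻ ω, ⨆ i, (ENNReal.ofReal (Z ω i) / ENNReal.ofReal (x i)) ^ α ∂μ := by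
  classical
  have hmeasE : ∀ u : ℝ, MeasurableSet {ω | ∃ i, x i < u * Z ω i} := by
    intro u
    have h : {ω | ∃ i, x i < u * Z ω i} = ⋃ i, {ω | x i < u * Z ω i} := by ext ω; simp
    rw [h]
    exact MeasurableSet.iUnion fun i =>
      measurableSet_lt measurable_const (measurable_const.mul ((measurable_pi_apply i).comp hZ))
  have hSm : MeasurableSet {p : ℝ × Ω | ∃ i, x i < p.1 * Z p.2 i} := by
    have h : {p : ℝ × Ω | ∃ i, x i < p.1 * Z p.2 i}
        = ⋃ i, {p : ℝ × Ω | x i < p.1 * Z p.2 i} := by ext p; simp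
    rw [h]
    exact MeasurableSet.iUnion fun i =>
      measurableSet_lt measurable_const
        (measurable_fst.mul ((measurable_pi_apply i).comp (hZ.comp measurable_snd)))
  set S := {p : ℝ × Ω | ∃ i, x i < p.1 * Z p.2 i} with hSdef
  have key : ∀ u ∈ Set.Ioi (0:ℝ),
      μ {ω | ∃ i, x i < u * Z ω i} * ENNReal.ofReal (α * u ^ (-α - 1))
      = ∫⁻ ω, S.indicator (fun _ => (1 : ℝ≥0∞)) (u, ω)
          * ENNReal.ofReal (α * u ^ (-α - 1)) ∂μ := by
    intro u _
    have h1 : ∀ ω, S.indicator (fun _ => (1 : ℝ≥0∞)) (u, ω)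
        = ({ω | ∃ i, x i < u * Z ω i}).indicator (fun _ => (1 : ℝ≥0∞)) ω := by
      intro ω
      by_cases h : ∃ i, x i < u * Z ω i
      · rw [Set.indicator_of_mem (show (u, ω) ∈ S from h),
          Set.indicator_of_mem (show ω ∈ {ω | ∃ i, x i < u * Z ω i} from h)]
      · rw [Set.indicator_of_notMem (show (u, ω) ∉ S from h),
          Set.indicator_of_notMem (show ω ∉ {ω | ∃ i, x i < u * Z ω i} from h)]
    simp_rw [h1]
    rw [lintegral_mul_const' _ _ ENNReal.ofReal_ne_top, lintegral_indicator_const (hmeasE u) 1, one_mul]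
  rw [setLIntegral_congr_fun measurableSet_Ioi key]
  have hf : AEMeasurable (Function.uncurry fun (u : ℝ) (ω : Ω) =>
      S.indicator (fun _ => (1 : ℝ≥0∞)) (u, ω) * ENNReal.ofReal (α * u ^ (-α - 1)))
      ((volume.restrict (Set.Ioi (0:ℝ))).prod μ) := by
    apply AEMeasurable.mul
    · exact ((measurable_const.indicator hSm).comp measurable_id).aemeasurable
    · exact (ENNReal.measurable_ofReal.comp
        ((measurable_const.mul ((measurable_fst (β := Ω)).pow measurable_const)))).aemeasurable
  rw [lintegral_lintegral_swap hf]
  refine lintegral_congr fun ω => ?_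
  have h2 : ∀ u : ℝ, S.indicator (fun _ => (1 : ℝ≥0∞)) (u, ω)
        * ENNReal.ofReal (α * u ^ (-α - 1))
      = ({u : ℝ | ∃ i, x i < u * Z ω i}).indicator
          (fun u => ENNReal.ofReal (α * u ^ (-α - 1))) u := by
    intro u
    by_cases h : ∃ i, x i < u * Z ω i
    · rw [Set.indicator_of_mem (show (u, ω) ∈ S from h),
        Set.indicator_of_mem (show u ∈ {u : ℝ | ∃ i, x i < u * Z ω i} from h), one_mul]
    · rw [Set.indicator_of_notMem (show (u, ω) ∉ S from h),
        Set.indicator_of_notMem (show u ∉ {u : ℝ | ∃ i, x i < u * Z ω i} from h), zero_mul]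
  simp_rw [h2]
  exact inner_eq α hα x (Z ω) hx (hZnn ω)
end

section
/- Let Z = (Z_1,…,Z_d) have independent Weibull components with P(Z_i ≤ x) = 1 - exp(-(x/λ_i)^β) for x>0, where λ_i > 0 and 0 < β < α. Then E[ max_{1≤i≤d} (Z_i/x_i)^α ] = Γ(1 + α/β) Σ_{∅ ≠ J ⊂ {1,…,d}} (-1)^{|J|+1} ( Σ_{j∈J} (x_j/λ_j)^β )^{-α/β} for all x ∈ (0,∞)^d. -/
open MeasureTheory Real Set

lemma aux_incl_excl {d : ℕ} (e : Fin d → ℝ) :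
    1 - ∏ i, (1 - e i) =
      ∑ J ∈ Finset.univ.powerset.filter (fun J : Finset (Fin d) => J.Nonempty),
        (-1:ℝ)^(J.card+1) * ∏ j ∈ J, e j := by
  have h1 : ∏ i, (1 - e i) = ∏ i, ((-e) i + 1) := by
    apply Finset.prod_congr rfl; intro i _; simp [sub_eq_neg_add]
  rw [h1, Finset.prod_add]
  have h2 : ∀ J : Finset (Fin d), (∏ j ∈ J, (-e) j) * (∏ j ∈ Finset.univ \ J, (1:ℝ))
      = (-1:ℝ)^J.card * ∏ j ∈ J, e j := by
    intro J
    simp only [Finset.prod_const_one, mul_one, Pi.neg_apply]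
    rw [show (fun j => -e j) = (fun j => (-1 : ℝ) * e j) by funext j; ring,
      Finset.prod_mul_distrib, Finset.prod_const]
  rw [Finset.sum_congr rfl (fun J _ => h2 J)]
  rw [← Finset.sum_filter_add_sum_filter_not Finset.univ.powerset
    (fun J : Finset (Fin d) => J.Nonempty)]
  have h3 : Finset.univ.powerset.filter (fun J : Finset (Fin d) => ¬ J.Nonempty) = {∅} := by
    ext J; simp [Finset.not_nonempty_iff_eq_empty]
  rw [h3]
  simp only [Finset.sum_singleton, Finset.card_empty, pow_zero, Finset.prod_empty, mul_one]
  rw [show ∀ a : ℝ, 1 - (a + 1) = -a by intro a; ring, ← Finset.sum_neg_distrib]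
  apply Finset.sum_congr rfl
  intro J _
  ring

lemma aux_integrable {p b : ℝ} (hp : 0 < p) (hb : 0 < b) :
    IntegrableOn (fun t : ℝ => Real.exp (-(b * t ^ p))) (Ioi 0) := by
  have h0 : IntegrableOn (fun y : ℝ => Real.exp (-y) * y ^ (1/p - 1)) (Ioi 0) :=
    Real.GammaIntegral_convergent (by positivity)
  have h1 : IntegrableOn (fun x : ℝ => Real.exp (-(b*x)) * (b*x) ^ (1/p - 1)) (Ioi 0) := by
    have := (integrableOn_Ioi_comp_mul_left_iff
      (fun y : ℝ => Real.exp (-y) * y ^ (1/p-1)) 0 hb).mpr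
    rw [mul_zero] at this
    exact this h0
  have h2 : IntegrableOn (fun x : ℝ => x ^ (1/p - 1) * Real.exp (-(b*x))) (Ioi 0) := by
    refine IntegrableOn.congr_fun (h1.const_mul (b ^ (1 - 1/p))) ?_ measurableSet_Ioi
    intro t ht
    show b ^ (1-1/p) * (Real.exp (-(b*t)) * (b*t) ^ (1/p - 1)) = t ^ (1/p - 1) * Real.exp (-(b*t))
    rw [Real.mul_rpow hb.le (le_of_lt ht)]
    rw [show b ^ (1-1/p) * (Real.exp (-(b*t)) * (b ^ (1/p-1) * t ^ (1/p-1)))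
      = (b ^ (1-1/p) * b ^ (1/p-1)) * (t ^ (1/p-1) * Real.exp (-(b*t))) by ring,
      ← Real.rpow_add hb]
    simp
  have key := (integrableOn_Ioi_comp_rpow_iff'
    (fun t : ℝ => Real.exp (-(b * t ^ p))) (p := 1/p) (one_div_ne_zero hp.ne')).mp ?_
  · exact key
  · refine IntegrableOn.congr_fun h2 ?_ measurableSet_Ioi
    intro t ht
    simp only [smul_eq_mul]
    rw [← Real.rpow_mul (le_of_lt (mem_Ioi.mp ht)), one_div_mul_cancel hp.ne', Real.rpow_one]

/-- Negative logistic model: for independent Weibull(λᵢ, β) components and `0 < β < α`,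
`E[max_i (Z_i/x_i)^α] = Γ(1+α/β) Σ_{∅≠J⊆{1,…,d}} (-1)^{|J|+1} (Σ_{j∈J}(x_j/λ_j)^β)^{-α/β}`. -/
theorem weibull_tail_function
    {Ω : Type*} [MeasurableSpace Ω] (μ : Measure Ω) [IsProbabilityMeasure μ]
    {d : ℕ} (hd : 0 < d) (lam : Fin d → ℝ) (hlam : ∀ i, 0 < lam i)
    (α β : ℝ) (hβ : 0 < β) (hβα : β < α)
    (Z : Ω → Fin d → ℝ) (hZ : ∀ i, Measurable fun ω => Z ω i)
    (hZpos : ∀ ω i, 0 < Z ω i)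
    (hindep : ProbabilityTheory.iIndepFun
      (fun i ω => Z ω i) μ)
    (hcdf : ∀ i, ∀ x : ℝ, 0 < x →
      μ {ω | Z ω i ≤ x} = ENNReal.ofReal (1 - Real.exp (-(x / lam i) ^ β)))
    (x : Fin d → ℝ) (hx : ∀ i, 0 < x i) :
    ∫⁻ ω, ENNReal.ofReal (⨆ i, (Z ω i / x i) ^ α) ∂μ =
      ENNReal.ofReal
        (Real.Gamma (1 + α / β) *
          ∑ J ∈ Finset.univ.powerset.filter (fun J : Finset (Fin d) => J.Nonempty),
            (-1 : ℝ) ^ (J.card + 1) * (∑ j ∈ J, (x j / lam j) ^ β) ^ (-(α / β))) := by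
  haveI : Nonempty (Fin d) := Fin.pos_iff_nonempty.mp hd
  have hα : 0 < α := hβ.trans hβα
  set p : ℝ := β / α with hpdef
  have hp : 0 < p := div_pos hβ hα
  have hpinv : 1 / p = α / β := one_div_div β α
  set c : Fin d → ℝ := fun i => (x i / lam i) ^ β with hcdef
  have hc : ∀ i, 0 < c i := fun i => Real.rpow_pos_of_pos (div_pos (hx i) (hlam i)) β
  set S := Finset.univ.powerset.filter (fun J : Finset (Fin d) => J.Nonempty) with hS
  have hCJ : ∀ J ∈ S, 0 < ∑ j ∈ J, c j := by
    intro J hJ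
    obtain ⟨j, hj⟩ := (Finset.mem_filter.mp hJ).2
    exact Finset.sum_pos (fun k _ => hc k) ⟨j, hj⟩
  set F : ℝ → ℝ := fun t =>
    ∑ J ∈ S, (-1:ℝ)^(J.card+1) * Real.exp (-((∑ j ∈ J, c j) * t ^ p)) with hFdef
  -- rewrite iSup as Finset.sup'
  set g : Ω → ℝ := fun ω =>
    Finset.univ.sup' Finset.univ_nonempty (fun i => (Z ω i / x i) ^ α) with hgdef
  have hgsup : ∀ ω, (⨆ i, (Z ω i / x i) ^ α) = g ω := by
    intro ω; rw [hgdef]; exact (Finset.sup'_univ_eq_ciSup _).symm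
  have hgmeas : Measurable g := by
    have : g = Finset.univ.sup' Finset.univ_nonempty (fun i ω => (Z ω i / x i) ^ α) := by
      funext ω; rw [hgdef, Finset.sup'_apply]
    rw [this]
    refine Finset.measurable_sup' _ (fun i _ => ?_)
    have h1 : Measurable fun ω => Z ω i / x i := (hZ i).div_const _
    fun_prop
  have hgnn : ∀ ω, 0 ≤ g ω := by
    intro ω
    obtain ⟨i⟩ := ‹Nonempty (Fin d)›
    exact le_trans (Real.rpow_nonneg (div_nonneg (hZpos ω i).le (hx i).le) α)
      (Finset.le_sup' (fun i => (Z ω i / x i) ^ α) (Finset.mem_univ i))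
  simp only [hgsup]
  rw [lintegral_eq_lintegral_meas_lt μ (ae_of_all _ hgnn) hgmeas.aemeasurable]
  -- the identity F = 1 - prod
  have hF_eq : ∀ t : ℝ, F t = 1 - ∏ i, (1 - Real.exp (-(c i * t ^ p))) := by
    intro t
    rw [aux_incl_excl (fun i => Real.exp (-(c i * t ^ p)))]
    refine (Finset.sum_congr rfl fun J hJ => ?_).symm
    congr 1
    rw [← Real.exp_sum]
    congr 1
    rw [Finset.sum_mul, ← Finset.sum_neg_distrib]
  have hfact_nn : ∀ (i : Fin d) (t : ℝ), 0 ≤ t →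
      0 ≤ 1 - Real.exp (-(c i * t ^ p)) := by
    intro i t ht
    have : Real.exp (-(c i * t ^ p)) ≤ 1 := by
      rw [Real.exp_le_one_iff]
      have : 0 ≤ c i * t ^ p := mul_nonneg (hc i).le (Real.rpow_nonneg ht p)
      linarith
    linarith
  -- tail probability
  have key : ∀ t ∈ Ioi (0:ℝ), μ {ω | t < g ω} = ENNReal.ofReal (F t) := by
    intro t ht
    have ht0 : (0:ℝ) < t := ht
    have hev : {ω | g ω ≤ t} = ⋂ i, {ω | Z ω i ≤ x i * t ^ α⁻¹} := by
      ext ω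
      simp only [mem_setOf_eq, mem_iInter, hgdef, Finset.sup'_le_iff, Finset.mem_univ,
        true_implies]
      refine forall_congr' fun i => ?_
      rw [← Real.le_rpow_inv_iff_of_pos
        (div_nonneg (hZpos ω i).le (hx i).le) ht0.le hα,
        div_le_iff₀ (hx i), mul_comm]
    have hsets : ∀ i, MeasurableSet[(inferInstance : MeasurableSpace ℝ).comap
        (fun ω => Z ω i)] {ω | Z ω i ≤ x i * t ^ α⁻¹} :=
      fun i => ⟨Iic (x i * t ^ α⁻¹), measurableSet_Iic, rfl⟩
    have hcompl : {ω | t < g ω} = {ω | g ω ≤ t}ᶜ := by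
      ext ω; simp [not_le]
    have hmeas_le : MeasurableSet {ω | g ω ≤ t} :=
      measurableSet_le hgmeas measurable_const
    rw [hcompl, prob_compl_eq_one_sub hmeas_le, hev, hindep.meas_iInter hsets]
    have hmi : ∀ i, μ {ω | Z ω i ≤ x i * t ^ α⁻¹}
        = ENNReal.ofReal (1 - Real.exp (-(c i * t ^ p))) := by
      intro i
      have hpos : 0 < x i * t ^ α⁻¹ := mul_pos (hx i) (Real.rpow_pos_of_pos ht0 _)
      rw [hcdf i _ hpos]
      congr 3
      rw [mul_div_right_comm, Real.mul_rpow (div_nonneg (hx i).le (hlam i).le)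
        (Real.rpow_nonneg ht0.le _), ← Real.rpow_mul ht0.le, hcdef]
      congr 1
      rw [hpdef]
      field_simp
    simp only [hmi]
    rw [← ENNReal.ofReal_prod_of_nonneg (fun i _ => hfact_nn i t ht0.le),
      hF_eq, ← ENNReal.ofReal_one,
      ← ENNReal.ofReal_sub _ (Finset.prod_nonneg (fun i _ => hfact_nn i t ht0.le))]
  rw [setLIntegral_congr_fun measurableSet_Ioi key]
  -- integrability
  have hFint : IntegrableOn F (Ioi 0) := by
    refine integrable_finset_sum S (fun J hJ => ?_)
    exact (aux_integrable hp (hCJ J hJ)).const_mul _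
  have hFnn : ∀ t ∈ Ioi (0:ℝ), 0 ≤ F t := by
    intro t ht
    rw [hF_eq]
    have : ∏ i, (1 - Real.exp (-(c i * t ^ p))) ≤ 1 :=
      Finset.prod_le_one (fun i _ => hfact_nn i t (le_of_lt ht))
        (fun i _ => by linarith [Real.exp_pos (-(c i * t ^ p))])
    linarith
  rw [← ofReal_integral_eq_lintegral_ofReal hFint
    ((ae_restrict_iff' measurableSet_Ioi).mpr (ae_of_all _ hFnn))]
  -- compute the integral
  have hint : ∫ t in Ioi (0:ℝ), F t
      = ∑ J ∈ S, (-1:ℝ)^(J.card+1) * ((∑ j ∈ J, c j) ^ (-1/p) * Real.Gamma (1/p + 1)) := by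
    rw [hFdef, integral_finset_sum S (fun J hJ => (aux_integrable hp (hCJ J hJ)).const_mul _)]
    refine Finset.sum_congr rfl fun J hJ => ?_
    rw [integral_const_mul]
    congr 1
    rw [← integral_exp_neg_mul_rpow hp (hCJ J hJ)]
    refine setIntegral_congr_fun measurableSet_Ioi fun t _ => ?_
    rw [neg_mul]
  rw [hint]
  congr 1
  rw [Finset.mul_sum]
  refine Finset.sum_congr rfl fun J hJ => ?_
  rw [hpinv]
  rw [show (1:ℝ) + α/β = α/β + 1 from add_comm _ _]
  rw [show -1/(p:ℝ) = -(1/p) by ring, hpinv]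
  ring
end

section
/- Let d ≥ 2, Q a symmetric positive semi-definite d×d matrix with kernel spanned by the all-ones vector 1_d, and l ∈ ℝ^d with lᵀ1_d < 0. Then the integral ∫_{(0,∞)^d \ (0,1]^d} exp( -½ (log z)ᵀ Q (log z) + lᵀ log z ) ∏_{i=1}^d z_i^{-1} dz is finite, so the Hüsler-Reiss Pareto density is well defined. -/
open MeasureTheory Matrix

namespace HRAux

open Real Set ENNReal

variable {n : ℕ}

/-- The "orthogonal-ish" part: zero out coordinate 0. -/
def Vv (u : Fin (n + 1) → ℝ) : Fin (n + 1) → ℝ := fun i => if i = 0 then 0 else u i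

/-- The shear `u ↦ u 0 • 1 + Vv u`. -/
def Tt (u : Fin (n + 1) → ℝ) : Fin (n + 1) → ℝ := fun i => u 0 + Vv u i

/-- `Tt` coordinates as continuous linear functionals. -/
noncomputable def phi (i : Fin (n + 1)) : (Fin (n + 1) → ℝ) →L[ℝ] ℝ :=
  (ContinuousLinearMap.proj 0 : (Fin (n + 1) → ℝ) →L[ℝ] ℝ) +
    (if i = 0 then 0 else (ContinuousLinearMap.proj i : (Fin (n + 1) → ℝ) →L[ℝ] ℝ))

lemma phi_apply (i : Fin (n + 1)) (u : Fin (n + 1) → ℝ) : phi i u = Tt u i := by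
  simp only [phi, Tt, Vv, ContinuousLinearMap.add_apply, ContinuousLinearMap.proj_apply]
  congr 1
  rw [apply_ite (fun f : (Fin (n + 1) → ℝ) →L[ℝ] ℝ => f u)]
  simp

lemma continuous_Tt_coord (i : Fin (n + 1)) : Continuous fun u : Fin (n + 1) → ℝ => Tt u i := by
  simp only [← phi_apply]; exact (phi i).continuous

/-- The region in `u`-coordinates. -/
def sT (n : ℕ) : Set (Fin (n + 1) → ℝ) := {u | ∃ i, 0 < Tt u i}

lemma measurableSet_sT : MeasurableSet (sT n) := by
  have : sT n = ⋃ i, {u : Fin (n + 1) → ℝ | 0 < Tt u i} := by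
    ext u; simp [sT]
  rw [this]
  exact MeasurableSet.iUnion fun i =>
    measurableSet_lt measurable_const (continuous_Tt_coord i).measurable

/-- Extension of `w` by a zero first coordinate. -/
def Ww (w : Fin n → ℝ) : Fin (n + 1) → ℝ := Fin.cons 0 w

lemma Vv_cons (t : ℝ) (w : Fin n → ℝ) : Vv (Fin.cons t w) = Ww w := by
  funext i
  refine Fin.cases ?_ (fun j => ?_) i
  · simp [Vv, Ww]
  · simp [Vv, Ww, Fin.succ_ne_zero]

lemma Tt_cons (t : ℝ) (w : Fin n → ℝ) : Tt (Fin.cons t w) = fun i => t + Ww w i := by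
  funext i
  simp only [Tt, Vv_cons t w, Fin.cons_zero]

lemma continuous_Ww : Continuous (Ww (n := n)) := by
  apply continuous_pi
  intro i
  refine Fin.cases ?_ (fun j => ?_) i
  · simpa [Ww] using continuous_const
  · simpa [Ww] using continuous_apply j

/-- The change of variables `z = exp (Tt u)`, stated for the exact integrand. -/
lemma key_cov (Q : Matrix (Fin (n + 1)) (Fin (n + 1)) ℝ) (l : Fin (n + 1) → ℝ) :
    ∫⁻ z in {z : Fin (n + 1) → ℝ | (∀ i, 0 < z i) ∧ ¬ ∀ i, z i ≤ 1},
        ENNReal.ofReal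
          (Real.exp (-(1 / 2) *
              ((fun i => Real.log (z i)) ⬝ᵥ Q.mulVec fun i => Real.log (z i)) +
              l ⬝ᵥ fun i => Real.log (z i)) *
            ∏ i, (z i)⁻¹)
      = ∫⁻ u in sT n,
          ENNReal.ofReal
            (Real.exp (-(1 / 2) * (Tt u ⬝ᵥ Q.mulVec (Tt u)) + l ⬝ᵥ Tt u)) := by
  classical
  set fmap : (Fin (n + 1) → ℝ) → (Fin (n + 1) → ℝ) := fun u i => Real.exp (Tt u i) with hfmap
  set f' : (Fin (n + 1) → ℝ) → (Fin (n + 1) → ℝ) →L[ℝ] (Fin (n + 1) → ℝ) :=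
    fun u => ContinuousLinearMap.pi (fun i => Real.exp (Tt u i) • phi i) with hf'
  have hderiv : ∀ u, HasFDerivAt fmap (f' u) u := by
    intro u
    apply hasFDerivAt_pi'.2
    intro i
    have hproj : (ContinuousLinearMap.proj i).comp (f' u) = Real.exp (Tt u i) • phi i := by
      ext v
      simp [hf']
    rw [hproj]
    have h1 : HasFDerivAt (fun v : Fin (n + 1) → ℝ => phi i v) (phi i) u := (phi i).hasFDerivAt
    have h2 := (Real.hasDerivAt_exp (phi i u)).comp_hasFDerivAt u h1
    have h3 : (fun v : Fin (n + 1) → ℝ => fmap v i) = fun v => Real.exp (phi i v) := by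
      funext v; rw [hfmap, phi_apply]
    rw [h3, ← phi_apply]
    exact h2
  have hdet : ∀ u, (f' u).det = ∏ i, Real.exp (Tt u i) := by
    intro u
    have h0 : (f' u).det
        = LinearMap.det ((f' u) : (Fin (n + 1) → ℝ) →ₗ[ℝ] (Fin (n + 1) → ℝ)) := rfl
    rw [h0, ← LinearMap.det_toMatrix (Pi.basisFun ℝ (Fin (n + 1)))]
    set M := LinearMap.toMatrix (Pi.basisFun ℝ (Fin (n + 1))) (Pi.basisFun ℝ (Fin (n + 1)))
      ((f' u) : (Fin (n + 1) → ℝ) →ₗ[ℝ] (Fin (n + 1) → ℝ)) with hM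
    have hMij : ∀ i j, M i j
        = Real.exp (Tt u i) * ((Pi.single j 1 : Fin (n + 1) → ℝ) 0
            + if i = 0 then 0 else (Pi.single j 1 : Fin (n + 1) → ℝ) i) := by
      intro i j
      rw [hM, LinearMap.toMatrix_apply]
      simp only [Pi.basisFun_apply, Pi.basisFun_repr, ContinuousLinearMap.coe_coe, hf',
        ContinuousLinearMap.pi_apply, ContinuousLinearMap.smul_apply, smul_eq_mul]
      congr 1
      simp only [phi, ContinuousLinearMap.add_apply, ContinuousLinearMap.proj_apply]
      congr 1
      rw [apply_ite (fun f : (Fin (n + 1) → ℝ) →L[ℝ] ℝ => f (Pi.single j 1))]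
      simp
    have htri : M.BlockTriangular OrderDual.toDual := by
      intro i j hij
      have hij' : i < j := hij
      have hj0 : j ≠ 0 := by
        rintro rfl
        exact absurd hij' (Fin.not_lt_zero i)
      rw [hMij]
      have h1 : (Pi.single j 1 : Fin (n + 1) → ℝ) 0 = 0 := Pi.single_eq_of_ne (Ne.symm hj0) 1
      have h2 : (Pi.single j 1 : Fin (n + 1) → ℝ) i = 0 :=
        Pi.single_eq_of_ne (ne_of_lt hij') 1
      rw [h1, h2]
      simp
    rw [Matrix.det_of_lowerTriangular M htri]
    refine Finset.prod_congr rfl fun i _ => ?_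
    rw [hMij]
    rcases eq_or_ne i 0 with h | h
    · subst h; simp
    · rw [if_neg h, Pi.single_eq_of_ne (Ne.symm h) 1, Pi.single_eq_same]
      simp
  have hinj : Function.Injective fmap := by
    intro u v h
    have hT : ∀ i, Tt u i = Tt v i := by
      intro i
      exact Real.exp_injective (congrFun h i)
    have h0 : u 0 = v 0 := by
      have := hT 0
      simpa [Tt, Vv] using this
    funext i
    rcases eq_or_ne i 0 with hi | hi
    · rw [hi]; exact h0
    · have := hT i
      simp only [Tt, Vv, if_neg hi] at this
      linarith [h0]
  have himg : fmap '' sT n = {z : Fin (n + 1) → ℝ | (∀ i, 0 < z i) ∧ ¬ ∀ i, z i ≤ 1} := by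
    ext z
    constructor
    · rintro ⟨u, hu, rfl⟩
      refine ⟨fun i => Real.exp_pos _, ?_⟩
      obtain ⟨i, hi⟩ := hu
      intro hall
      have h1 : (1 : ℝ) < Real.exp (Tt u i) := Real.one_lt_exp_iff.2 hi
      exact absurd (hall i) (not_le.2 h1)
    · rintro ⟨hpos, hne⟩
      push_neg at hne
      obtain ⟨i, hi⟩ := hne
      set u : Fin (n + 1) → ℝ :=
        fun i => if i = 0 then Real.log (z 0) else Real.log (z i) - Real.log (z 0) with hu
      have hTu : ∀ k, Tt u k = Real.log (z k) := by
        intro k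
        rcases eq_or_ne k 0 with h | h
        · subst h; simp [Tt, Vv, hu]
        · simp only [Tt, Vv, hu, if_neg h, if_pos rfl]
          ring
      refine ⟨u, ⟨i, ?_⟩, ?_⟩
      · rw [hTu]; exact Real.log_pos hi
      · funext j
        rw [hfmap]
        simp only [hTu]
        exact Real.exp_log (hpos j)
  rw [← himg,
    lintegral_image_eq_lintegral_abs_det_fderiv_mul volume measurableSet_sT
      (fun u _ => (hderiv u).hasFDerivWithinAt) hinj.injOn]
  refine lintegral_congr fun u => ?_
  have hP : (0 : ℝ) < ∏ i, Real.exp (Tt u i) := Finset.prod_pos fun i _ => Real.exp_pos _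
  have hlog : (fun i => Real.log (fmap u i)) = Tt u := by
    funext i
    rw [hfmap]
    exact Real.log_exp _
  have habs : |(f' u).det| = ∏ i, Real.exp (Tt u i) := by
    rw [hdet]; exact abs_of_pos hP
  rw [habs]
  have hprod : (∏ i, (fmap u i)⁻¹) = (∏ i, Real.exp (Tt u i))⁻¹ := by
    rw [← Finset.prod_inv_distrib]
  rw [hlog, hprod]
  rw [← ENNReal.ofReal_mul hP.le]
  congr 1
  rw [mul_comm (Real.exp _), ← mul_assoc, mul_inv_cancel₀ hP.ne', one_mul]

/-- Algebraic simplification of the quadratic and linear forms along the shear. -/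
lemma forms_simp (Q : Matrix (Fin (n + 1)) (Fin (n + 1)) ℝ) (l : Fin (n + 1) → ℝ)
    (hQ : Q.PosSemidef)
    (hker : ∀ v : Fin (n + 1) → ℝ, Q.mulVec v = 0 ↔ ∃ c : ℝ, v = fun _ => c)
    (u : Fin (n + 1) → ℝ) :
    -(1 / 2) * (Tt u ⬝ᵥ Q.mulVec (Tt u)) + l ⬝ᵥ Tt u
      = -(1 / 2) * (Vv u ⬝ᵥ Q.mulVec (Vv u)) + l ⬝ᵥ Vv u + (∑ i, l i) * u 0 := by
  have hc : ∀ c : ℝ, Q.mulVec (fun _ => c) = 0 := fun c => (hker _).mpr ⟨c, rfl⟩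
  have hsplit : Tt u = (fun _ => u 0) + Vv u := by
    funext i; simp [Tt, Pi.add_apply]
  have hQT : Qᵀ = Q := by
    have := hQ.1
    rw [← Matrix.conjTranspose_eq_transpose_of_trivial]; exact this
  have hmv : Q.mulVec (Tt u) = Q.mulVec (Vv u) := by
    rw [hsplit, Matrix.mulVec_add, hc (u 0), zero_add]
  have hsum : (fun _ => (1 : ℝ)) ⬝ᵥ Q.mulVec (Vv u) = 0 := by
    rw [Matrix.dotProduct_mulVec]
    have h1 : (fun _ => (1 : ℝ)) ᵥ* Q = 0 := by
      have := Matrix.vecMul_transpose Q (fun _ => (1 : ℝ))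
      rw [hQT] at this
      rw [this, hc 1]
    rw [h1, zero_dotProduct]
  have hconst : (fun _ : Fin (n + 1) => u 0) = u 0 • (fun _ => (1 : ℝ)) := by
    funext i; simp
  have hq : Tt u ⬝ᵥ Q.mulVec (Tt u) = Vv u ⬝ᵥ Q.mulVec (Vv u) := by
    rw [hmv, hsplit, add_dotProduct, hconst, smul_dotProduct, hsum]
    simp
  have hlin : l ⬝ᵥ Tt u = (∑ i, l i) * u 0 + l ⬝ᵥ Vv u := by
    rw [hsplit, dotProduct_add]
    congr 1
    simp only [dotProduct, Finset.sum_mul]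
  rw [hq, hlin]; ring

/-- The inner one-dimensional integral. -/
lemma inner_integral {S : ℝ} (hS : S < 0) (r : ℝ) :
    ∫⁻ t in Ioi r, ENNReal.ofReal (Real.exp (S * t)) = ENNReal.ofReal (Real.exp (S * r) / (-S)) := by
  have hS' : 0 < -S := neg_pos.2 hS
  have hint : IntegrableOn (fun t : ℝ => Real.exp (S * t)) (Ioi r) := by
    have := exp_neg_integrableOn_Ioi r hS'
    simpa [neg_mul, neg_neg] using this
  rw [← ofReal_integral_eq_lintegral_ofReal hint
      (Filter.Eventually.of_forall fun t => (Real.exp_pos _).le)]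
  congr 1
  have hderiv : ∀ x ∈ Ici r, HasDerivAt (fun t => Real.exp (S * t) / S) (Real.exp (S * x)) x := by
    intro x _
    have h1 : HasDerivAt (fun t : ℝ => S * t) S x := by
      simpa using (hasDerivAt_id x).const_mul S
    have h2 := h1.exp.div_const S
    have h3 : Real.exp (S * x) * S / S = Real.exp (S * x) :=
      mul_div_cancel_right₀ _ (ne_of_lt hS)
    simpa [h3] using h2
  have htend : Filter.Tendsto (fun t => Real.exp (S * t) / S) Filter.atTop (nhds 0) := by
    have h1 : Filter.Tendsto (fun t : ℝ => S * t) Filter.atTop Filter.atBot :=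
      Filter.tendsto_id.const_mul_atTop_of_neg hS
    have h2 : Filter.Tendsto (fun t : ℝ => Real.exp (S * t)) Filter.atTop (nhds 0) :=
      Real.tendsto_exp_atBot.comp h1
    simpa using h2.div_const S
  have := integral_Ioi_of_hasDerivAt_of_tendsto' hderiv hint htend
  rw [this]
  rw [zero_sub, div_neg]

/-- Positive-definiteness of the restricted quadratic form, quantitatively. -/
lemma quad_lower_bound (hn : 1 ≤ n) (Q : Matrix (Fin (n + 1)) (Fin (n + 1)) ℝ)
    (hQ : Q.PosSemidef)
    (hker : ∀ v : Fin (n + 1) → ℝ, Q.mulVec v = 0 ↔ ∃ c : ℝ, v = fun _ => c) :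
    ∃ ε > 0, ∀ w : Fin n → ℝ, ε * (∑ j, w j ^ 2) ≤ Ww w ⬝ᵥ Q.mulVec (Ww w) := by
  classical
  set f : (Fin n → ℝ) → ℝ := fun w => Ww w ⬝ᵥ Q.mulVec (Ww w) with hf
  have hfnonneg : ∀ w, 0 ≤ f w := by
    intro w
    have := hQ.dotProduct_mulVec_nonneg (Ww w)
    simpa using this
  have hWsmul : ∀ (c : ℝ) (w : Fin n → ℝ), Ww (c • w) = c • Ww w := by
    intro c w; funext i
    refine Fin.cases ?_ (fun j => ?_) i <;> simp [Ww]
  have hfsmul : ∀ (c : ℝ) (w : Fin n → ℝ), f (c • w) = c ^ 2 * f w := by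
    intro c w
    simp only [hf, hWsmul, smul_dotProduct, Matrix.mulVec_smul,
      dotProduct_smul, smul_eq_mul]
    ring
  have hfzero : ∀ w : Fin n → ℝ, f w = 0 → w = 0 := by
    intro w hw
    have hstar : star (Ww w) ⬝ᵥ Q.mulVec (Ww w) = 0 := by simpa using hw
    have h0 : Q.mulVec (Ww w) = 0 := (hQ.dotProduct_mulVec_zero_iff (Ww w)).1 hstar
    obtain ⟨c, hc⟩ := (hker _).1 h0
    have hc0 : c = 0 := by
      have := congrFun hc 0
      simpa [Ww] using this.symm
    funext j
    have := congrFun hc j.succ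
    simpa [Ww, hc0] using this
  have hfcont : Continuous f := by
    refine (Continuous.dotProduct ?_ (Continuous.matrix_mulVec continuous_const ?_)) <;>
      exact continuous_Ww
  -- the unit sphere (for the ℓ² sum of squares) is compact and nonempty
  set K : Set (Fin n → ℝ) := {w | ∑ j, w j ^ 2 = 1} with hK
  have hgcont : Continuous fun w : Fin n → ℝ => ∑ j, w j ^ 2 :=
    continuous_finset_sum _ fun j _ => (continuous_apply j).pow 2
  have hKclosed : IsClosed K := isClosed_eq hgcont continuous_const
  have hKbdd : Bornology.IsBounded K := by
    refine (Metric.isBounded_closedBall (x := (0 : Fin n → ℝ)) (r := 1)).subset ?_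
    intro w hw
    simp only [Metric.mem_closedBall, dist_zero_right]
    refine pi_norm_le_iff_of_nonneg zero_le_one |>.2 fun j => ?_
    have h1 : w j ^ 2 ≤ 1 := by
      rw [← hw]
      exact Finset.single_le_sum (fun k _ => sq_nonneg (w k)) (Finset.mem_univ j)
    rw [Real.norm_eq_abs]
    nlinarith [sq_abs (w j), abs_nonneg (w j)]
  have hKcompact : IsCompact K := Metric.isCompact_of_isClosed_isBounded hKclosed hKbdd
  have hKne : K.Nonempty := by
    obtain ⟨i0⟩ : Nonempty (Fin n) := ⟨⟨0, hn⟩⟩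
    refine ⟨fun j => if j = i0 then 1 else 0, ?_⟩
    have : ∀ j, (if j = i0 then (1 : ℝ) else 0) ^ 2 = if j = i0 then 1 else 0 := by
      intro j; by_cases h : j = i0 <;> simp [h]
    simp only [hK, Set.mem_setOf_eq, this]
    simp
  obtain ⟨w1, hw1K, hmin⟩ := hKcompact.exists_isMinOn hKne hfcont.continuousOn
  refine ⟨f w1, ?_, ?_⟩
  · rcases lt_or_eq_of_le (hfnonneg w1) with h | h
    · exact h
    · exfalso
      have hw1 : w1 = 0 := hfzero w1 h.symm
      rw [hw1] at hw1K
      simp [hK] at hw1K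
  · intro w
    rcases eq_or_ne (∑ j, w j ^ 2) 0 with h0 | h0
    · rw [h0, mul_zero]
      exact hfnonneg w
    · have hpos : 0 < ∑ j, w j ^ 2 := lt_of_le_of_ne
        (Finset.sum_nonneg fun j _ => sq_nonneg (w j)) (Ne.symm h0)
      set r : ℝ := Real.sqrt (∑ j, w j ^ 2) with hr
      have hrpos : 0 < r := Real.sqrt_pos.2 hpos
      have hr2 : r ^ 2 = ∑ j, w j ^ 2 := Real.sq_sqrt hpos.le
      set w' : Fin n → ℝ := r⁻¹ • w with hw'
      have hw'K : w' ∈ K := by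
        simp only [hK, Set.mem_setOf_eq, hw', Pi.smul_apply, smul_eq_mul, mul_pow,
          ← Finset.mul_sum]
        rw [← hr2]
        field_simp
      have hww : w = r • w' := by
        rw [hw']; funext j; simp [hrpos.ne']
      have h1 : f w1 ≤ f w' := hmin hw'K
      calc f w1 * (∑ j, w j ^ 2) = r ^ 2 * f w1 := by rw [hr2]; ring
        _ ≤ r ^ 2 * f w' := by
            apply mul_le_mul_of_nonneg_left h1 (sq_nonneg r)
        _ = f w := by
            conv_rhs => rw [hww, hfsmul]

/-- One-dimensional integrability of the dominating function. -/
lemma integrable_aux {ε : ℝ} (hε : 0 < ε) (C : ℝ) :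
    Integrable (fun x : ℝ => Real.exp (-ε * x ^ 2 + C * |x|)) := by
  have h2 : 0 < ε / 2 := half_pos hε
  refine Integrable.mono'
    ((integrable_exp_neg_mul_sq h2).const_mul (Real.exp (C ^ 2 / (2 * ε)))) ?_ ?_
  · refine Continuous.aestronglyMeasurable ?_
    exact Real.continuous_exp.comp
      (((continuous_const.mul ((continuous_id.pow 2))).add
        (continuous_const.mul continuous_abs)))
  · filter_upwards with x
    rw [Real.norm_eq_abs, abs_of_pos (Real.exp_pos _), ← Real.exp_add]
    apply Real.exp_le_exp.2
    rw [← sq_abs x]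
    set y := |x| with hy
    rw [← sub_nonneg]
    have hxx : C ^ 2 / (2 * ε) + -(ε / 2) * y ^ 2 - (-ε * y ^ 2 + C * y)
        = (C - ε * y) ^ 2 / (2 * ε) := by
      field_simp; ring
    rw [hxx]; positivity

end HRAux

set_option maxHeartbeats 1000000 in
/-- Finiteness of the Hüsler-Reiss Pareto normalizing constant: if `Q` is symmetric
positive semi-definite with kernel spanned by `1_d` and `lᵀ1_d < 0`, then the
integral defining the normalizing constant (threshold `a = 1_d`) is finite. -/
theorem hr_pareto_normalizing_constant_finite
    {d : ℕ} (hd : 2 ≤ d)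
    (Q : Matrix (Fin d) (Fin d) ℝ) (l : Fin d → ℝ)
    (hQ : Q.PosSemidef)
    (hker : ∀ v : Fin d → ℝ, Q.mulVec v = 0 ↔ ∃ c : ℝ, v = fun _ => c)
    (hl : ∑ i, l i < 0) :
    ∫⁻ z in {z : Fin d → ℝ | (∀ i, 0 < z i) ∧ ¬ ∀ i, z i ≤ 1},
        ENNReal.ofReal
          (Real.exp (-(1 / 2) *
              ((fun i => Real.log (z i)) ⬝ᵥ Q.mulVec fun i => Real.log (z i)) +
              l ⬝ᵥ fun i => Real.log (z i)) *
            ∏ i, (z i)⁻¹) < ⊤ := by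
  obtain ⟨n, rfl⟩ : ∃ n, d = n + 1 := ⟨d - 1, by omega⟩
  have hn : 1 ≤ n := by omega
  rw [HRAux.key_cov Q l]
  set S : ℝ := ∑ i, l i with hSdef
  have hS : S < 0 := hl
  have hSpos : 0 < -S := neg_pos.2 hS
  obtain ⟨ε, hε, hquad⟩ := HRAux.quad_lower_bound hn Q hQ hker
  set C : ℝ := (∑ i, |l i|) + (-S) with hCdef
  -- continuity facts
  have hcontVv : Continuous (HRAux.Vv (n := n)) := by
    apply continuous_pi
    intro i
    rcases eq_or_ne i 0 with h | h
    · subst h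
      simp only [HRAux.Vv, if_pos rfl]
      exact continuous_const
    · simp only [HRAux.Vv, if_neg h]
      exact continuous_apply i
  -- functions
  set aF : (Fin n → ℝ) → ℝ := fun w =>
    -(1 / 2) * (HRAux.Ww w ⬝ᵥ Q.mulVec (HRAux.Ww w)) + l ⬝ᵥ HRAux.Ww w with haF
  set Mw : (Fin n → ℝ) → ℝ := fun w => Finset.univ.sup' Finset.univ_nonempty (HRAux.Ww w)
    with hMw
  set G : (Fin (n + 1) → ℝ) → ENNReal := fun u =>
    ENNReal.ofReal (Real.exp (-(1 / 2) * (HRAux.Vv u ⬝ᵥ Q.mulVec (HRAux.Vv u))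
      + l ⬝ᵥ HRAux.Vv u + S * u 0)) with hGdef
  have hcontG : Continuous fun u : Fin (n + 1) → ℝ =>
      -(1 / 2) * (HRAux.Vv u ⬝ᵥ Q.mulVec (HRAux.Vv u)) + l ⬝ᵥ HRAux.Vv u + S * u 0 := by
    refine Continuous.add (Continuous.add ?_ ?_) ?_
    · exact continuous_const.mul
        (Continuous.dotProduct hcontVv
          (Continuous.matrix_mulVec continuous_const hcontVv))
    · exact Continuous.dotProduct continuous_const hcontVv
    · exact continuous_const.mul (continuous_apply 0)
  have hGmeas : Measurable G :=
    ENNReal.measurable_ofReal.comp (Real.continuous_exp.comp hcontG).measurable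
  -- rewrite the integrand using `forms_simp`
  have hstep1 : ∫⁻ u in HRAux.sT n,
      ENNReal.ofReal
        (Real.exp (-(1 / 2) * (HRAux.Tt u ⬝ᵥ Q.mulVec (HRAux.Tt u)) + l ⬝ᵥ HRAux.Tt u))
      = ∫⁻ u, (HRAux.sT n).indicator G u := by
    rw [lintegral_indicator HRAux.measurableSet_sT]
    refine lintegral_congr fun u => ?_
    rw [HRAux.forms_simp Q l hQ hker u]
  rw [hstep1]
  -- split off the first coordinate
  set e := MeasurableEquiv.piFinSuccAbove (fun _ : Fin (n + 1) => ℝ) 0 with he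
  have mp := (MeasureTheory.volume_preserving_piFinSuccAbove (fun _ : Fin (n + 1) => ℝ) 0).symm
  have hHmeas : Measurable ((HRAux.sT n).indicator G) :=
    hGmeas.indicator HRAux.measurableSet_sT
  rw [← mp.lintegral_comp hHmeas]
  set A : Set (ℝ × (Fin n → ℝ)) := {p | ∃ i, 0 < p.1 + HRAux.Ww p.2 i} with hA
  set F0 : ℝ × (Fin n → ℝ) → ENNReal := fun p =>
    ENNReal.ofReal (Real.exp (aF p.2 + S * p.1)) with hF0
  have hcons : ∀ p : ℝ × (Fin n → ℝ), e.symm p = Fin.cons p.1 p.2 := by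
    intro p
    rw [he]
    simp [MeasurableEquiv.piFinSuccAbove_symm_apply, Fin.insertNthEquiv, Fin.insertNth_zero']
  have hind : (fun p : ℝ × (Fin n → ℝ) => (HRAux.sT n).indicator G (e.symm p))
      = A.indicator F0 := by
    funext p
    rw [hcons p]
    have hmem : Fin.cons p.1 p.2 ∈ HRAux.sT n ↔ p ∈ A := by
      simp only [HRAux.sT, Set.mem_setOf_eq, HRAux.Tt_cons, hA]
    by_cases hp : p ∈ A
    · rw [Set.indicator_of_mem (hmem.2 hp), Set.indicator_of_mem hp]
      simp only [hGdef, hF0, haF, HRAux.Vv_cons, Fin.cons_zero]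
    · rw [Set.indicator_of_notMem (fun h => hp (hmem.1 h)), Set.indicator_of_notMem hp]
  rw [hind]
  have hAmeas : MeasurableSet A := by
    have hAeq : A = ⋃ i, {p : ℝ × (Fin n → ℝ) | 0 < p.1 + HRAux.Ww p.2 i} := by
      ext p; simp [hA]
    rw [hAeq]
    refine MeasurableSet.iUnion fun i => ?_
    exact measurableSet_lt measurable_const
      (continuous_fst.add
        ((continuous_apply i).comp (HRAux.continuous_Ww.comp continuous_snd))).measurable
  have hWc : Continuous fun p : ℝ × (Fin n → ℝ) => HRAux.Ww p.2 :=
    HRAux.continuous_Ww.comp continuous_snd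
  have hF0meas : Measurable F0 := by
    refine ENNReal.measurable_ofReal.comp (Real.continuous_exp.comp ?_).measurable
    refine Continuous.add (Continuous.add ?_ ?_) ?_
    · exact continuous_const.mul
        (Continuous.dotProduct hWc (Continuous.matrix_mulVec continuous_const hWc))
    · exact Continuous.dotProduct continuous_const hWc
    · exact continuous_const.mul continuous_fst
  have hmeasF : Measurable (A.indicator F0) := hF0meas.indicator hAmeas
  rw [Measure.volume_eq_prod, lintegral_prod_symm _ hmeasF.aemeasurable]
  -- evaluate the inner integral
  have hinner : ∀ w : Fin n → ℝ,
      ∫⁻ t, A.indicator F0 (t, w)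
        = ENNReal.ofReal (Real.exp (aF w)) *
            ENNReal.ofReal (Real.exp (S * -(Mw w)) / (-S)) := by
    intro w
    have hslice : (fun t : ℝ => A.indicator F0 (t, w))
        = (Set.Ioi (-(Mw w))).indicator
            (fun t => ENNReal.ofReal (Real.exp (aF w + S * t))) := by
      funext t
      have hiff : (t, w) ∈ A ↔ t ∈ Set.Ioi (-(Mw w)) := by
        constructor
        · rintro ⟨i, hi⟩
          have h1 : HRAux.Ww w i ≤ Mw w := Finset.le_sup' _ (Finset.mem_univ i)
          simp only [Set.mem_Ioi]
          linarith
        · intro ht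
          obtain ⟨i, -, hie⟩ := Finset.exists_mem_eq_sup'
            (Finset.univ_nonempty) (HRAux.Ww w)
          refine ⟨i, ?_⟩
          simp only [Set.mem_Ioi] at ht
          have h2 : Mw w = HRAux.Ww w i := hie
          show 0 < t + HRAux.Ww w i
          linarith [h2 ▸ ht]
      by_cases h : (t, w) ∈ A
      · rw [Set.indicator_of_mem h, Set.indicator_of_mem (hiff.1 h)]
      · rw [Set.indicator_of_notMem h, Set.indicator_of_notMem (fun h' => h (hiff.2 h'))]
    rw [hslice, lintegral_indicator measurableSet_Ioi]
    simp_rw [Real.exp_add, ENNReal.ofReal_mul (Real.exp_pos _).le]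
    rw [lintegral_const_mul' _ _ ENNReal.ofReal_ne_top,
      HRAux.inner_integral hS (-(Mw w))]
  rw [lintegral_congr hinner]
  -- bound the outer integral by a product of gaussians
  have hbound : ∀ w : Fin n → ℝ,
      ENNReal.ofReal (Real.exp (aF w)) * ENNReal.ofReal (Real.exp (S * -(Mw w)) / (-S))
        ≤ ENNReal.ofReal ((-S)⁻¹) *
            ENNReal.ofReal (∏ j, Real.exp (-(ε / 2) * w j ^ 2 + C * |w j|)) := by
    intro w
    rw [← ENNReal.ofReal_mul (Real.exp_pos _).le, ← ENNReal.ofReal_mul (by positivity)]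
    apply ENNReal.ofReal_le_ofReal
    have hprod : ∏ j, Real.exp (-(ε / 2) * w j ^ 2 + C * |w j|)
        = Real.exp (∑ j, (-(ε / 2) * w j ^ 2 + C * |w j|)) := by
      rw [Real.exp_sum]
    rw [hprod]
    have hls : Real.exp (aF w) * (Real.exp (S * -(Mw w)) / (-S))
        = (-S)⁻¹ * (Real.exp (aF w) * Real.exp (S * -(Mw w))) := by ring
    rw [hls, ← Real.exp_add]
    apply mul_le_mul_of_nonneg_left _ (by positivity)
    apply Real.exp_le_exp.2
    -- the key elementary inequality
    set B : ℝ := ∑ j, |w j| with hB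
    have hBnn : 0 ≤ B := Finset.sum_nonneg fun j _ => abs_nonneg _
    have hq := hquad w
    have hWle : ∀ i, |HRAux.Ww w i| ≤ B := by
      intro i
      refine Fin.cases ?_ (fun j => ?_) i
      · simp only [HRAux.Ww, Fin.cons_zero, abs_zero]
        exact hBnn
      · simp only [HRAux.Ww, Fin.cons_succ]
        exact Finset.single_le_sum (fun k _ => abs_nonneg (w k)) (Finset.mem_univ j)
    have hlW : l ⬝ᵥ HRAux.Ww w ≤ (∑ i, |l i|) * B := by
      calc l ⬝ᵥ HRAux.Ww w = ∑ i, l i * HRAux.Ww w i := rfl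
        _ ≤ ∑ i, |l i| * B := by
            refine Finset.sum_le_sum fun i _ => ?_
            calc l i * HRAux.Ww w i ≤ |l i * HRAux.Ww w i| := le_abs_self _
              _ = |l i| * |HRAux.Ww w i| := abs_mul _ _
              _ ≤ |l i| * B := mul_le_mul_of_nonneg_left (hWle i) (abs_nonneg _)
        _ = (∑ i, |l i|) * B := (Finset.sum_mul _ _ _).symm
    have hMB : Mw w ≤ B :=
      Finset.sup'_le _ _ fun i _ => (le_abs_self _).trans (hWle i)
    have hMS : (-S) * Mw w ≤ (-S) * B := mul_le_mul_of_nonneg_left hMB hSpos.le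
    have hsum : ∑ j, (-(ε / 2) * w j ^ 2 + C * |w j|)
        = -(ε / 2) * (∑ j, w j ^ 2) + C * B := by
      rw [Finset.sum_add_distrib, ← Finset.mul_sum, ← Finset.mul_sum]
    rw [hsum, haF]
    have hSM : S * -(Mw w) = (-S) * Mw w := by ring
    rw [hSM, hCdef]
    nlinarith [hq, hlW, hMS, hBnn]
  have hint : Integrable fun w : Fin n → ℝ =>
      ∏ j, Real.exp (-(ε / 2) * w j ^ 2 + C * |w j|) :=
    Integrable.fintype_prod fun j => HRAux.integrable_aux (half_pos hε) C
  have hfin : ∫⁻ w : Fin n → ℝ,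
      ENNReal.ofReal (∏ j, Real.exp (-(ε / 2) * w j ^ 2 + C * |w j|)) < ⊤ := by
    rw [← hasFiniteIntegral_iff_ofReal
      (Filter.Eventually.of_forall fun w =>
        Finset.prod_nonneg fun j _ => (Real.exp_pos _).le)]
    exact hint.2
  have step1 : ∫⁻ w, ENNReal.ofReal (Real.exp (aF w)) *
        ENNReal.ofReal (Real.exp (S * -(Mw w)) / (-S))
      ≤ ∫⁻ w : Fin n → ℝ, ENNReal.ofReal ((-S)⁻¹) *
          ENNReal.ofReal (∏ j, Real.exp (-(ε / 2) * w j ^ 2 + C * |w j|)) :=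
    lintegral_mono fun w => hbound w
  have step2 : ∫⁻ w : Fin n → ℝ, ENNReal.ofReal ((-S)⁻¹) *
          ENNReal.ofReal (∏ j, Real.exp (-(ε / 2) * w j ^ 2 + C * |w j|))
      = ENNReal.ofReal ((-S)⁻¹) *
          ∫⁻ w : Fin n → ℝ, ENNReal.ofReal (∏ j, Real.exp (-(ε / 2) * w j ^ 2 + C * |w j|)) :=
    lintegral_const_mul' _ _ ENNReal.ofReal_ne_top
  refine lt_of_le_of_lt step1 ?_
  rw [step2]
  exact ENNReal.mul_lt_top ENNReal.ofReal_lt_top hfin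
end

section
/- Conversely, if Q is a symmetric d×d matrix with Q 1_d = 0 and l ∈ ℝ^d, and the integral ∫_{(0,∞)^d \ (0,1]^d} exp( -½ (log z)ᵀ Q (log z) + lᵀ log z ) ∏ z_i^{-1} dz is finite, then Q restricted to the orthogonal complement of 1_d is positive definite (so Ker Q = span(1_d)) and lᵀ 1_d < 0. -/
open MeasureTheory Matrix

lemma hr_hasFDerivAt {d : ℕ} (y : Fin d → ℝ) :
    HasFDerivAt (fun y : Fin d → ℝ => fun i => Real.exp (y i))
      ((ContinuousLinearMap.pi fun i : Fin d => Real.exp (y i) • ContinuousLinearMap.proj i :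
        (Fin d → ℝ) →L[ℝ] (Fin d → ℝ))) y := by
  apply hasFDerivAt_pi''
  intro i
  have h1 : HasFDerivAt (fun x : Fin d → ℝ => x i)
      (ContinuousLinearMap.proj i : (Fin d → ℝ) →L[ℝ] ℝ) y := hasFDerivAt_apply i y
  have h2 := (Real.hasDerivAt_exp (y i)).comp_hasFDerivAt y h1
  have h3 : (ContinuousLinearMap.proj i : (Fin d → ℝ) →L[ℝ] ℝ).comp
      (ContinuousLinearMap.pi fun i : Fin d => Real.exp (y i) • ContinuousLinearMap.proj i :
        (Fin d → ℝ) →L[ℝ] (Fin d → ℝ))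
      = Real.exp (y i) • (ContinuousLinearMap.proj i : (Fin d → ℝ) →L[ℝ] ℝ) := by
    ext v; simp
  rw [h3]
  exact h2

lemma hr_det_diag {d : ℕ} (c : Fin d → ℝ) :
    ((ContinuousLinearMap.pi fun i : Fin d => c i • ContinuousLinearMap.proj i :
      (Fin d → ℝ) →L[ℝ] (Fin d → ℝ))).det = ∏ i, c i := by
  rw [ContinuousLinearMap.det]
  rw [← LinearMap.det_toMatrix' ]
  have : LinearMap.toMatrix' ((ContinuousLinearMap.pi fun i : Fin d => c i • ContinuousLinearMap.proj i :
      (Fin d → ℝ) →L[ℝ] (Fin d → ℝ)) : (Fin d → ℝ) →ₗ[ℝ] (Fin d → ℝ)) = Matrix.diagonal c := by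
    ext i j
    simp [LinearMap.toMatrix'_apply, Matrix.diagonal, Pi.single_apply]
  rw [this, Matrix.det_diagonal]

lemma hr_cov {d : ℕ} (F : (Fin d → ℝ) → ℝ) :
    ∫⁻ z in {z : Fin d → ℝ | (∀ i, 0 < z i) ∧ ¬ ∀ i, z i ≤ 1},
      ENNReal.ofReal (Real.exp (F fun i => Real.log (z i)) * ∏ i, (z i)⁻¹)
    = ∫⁻ y in {y : Fin d → ℝ | ¬ ∀ i, y i ≤ 0}, ENNReal.ofReal (Real.exp (F y)) := by
  set s := {y : Fin d → ℝ | ¬ ∀ i, y i ≤ 0} with hsdef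
  have hs : MeasurableSet s := by
    have : s = (⋂ i, {y : Fin d → ℝ | y i ≤ 0})ᶜ := by
      ext y; simp [hsdef]
    rw [this]
    exact (MeasurableSet.iInter fun i =>
      measurableSet_le (measurable_pi_apply i) measurable_const).compl
  have himg : (fun y : Fin d → ℝ => fun i => Real.exp (y i)) '' s
      = {z : Fin d → ℝ | (∀ i, 0 < z i) ∧ ¬ ∀ i, z i ≤ 1} := by
    ext z
    constructor
    · rintro ⟨y, hy, rfl⟩
      refine ⟨fun i => Real.exp_pos _, ?_⟩
      have hy' : ¬ ∀ i, y i ≤ 0 := hy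
      simpa [Real.exp_le_one_iff] using hy'
    · rintro ⟨hpos, hne⟩
      refine ⟨fun i => Real.log (z i), ?_, ?_⟩
      · intro hall
        apply hne
        intro i
        have := hall i
        calc z i = Real.exp (Real.log (z i)) := (Real.exp_log (hpos i)).symm
        _ ≤ Real.exp 0 := Real.exp_le_exp.2 this
        _ = 1 := Real.exp_zero
      · funext i
        exact Real.exp_log (hpos i)
  have hinj : Set.InjOn (fun y : Fin d → ℝ => fun i => Real.exp (y i)) s := by
    intro y1 _ y2 _ h
    funext i
    exact Real.exp_injective (congrFun h i)
  rw [← himg, lintegral_image_eq_lintegral_abs_det_fderiv_mul volume hs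
    (fun y _ => (hr_hasFDerivAt y).hasFDerivWithinAt) hinj]
  apply lintegral_congr
  intro y
  rw [hr_det_diag]
  have hp : 0 < ∏ i, Real.exp (y i) := Finset.prod_pos fun i _ => Real.exp_pos _
  rw [abs_of_pos hp, ← ENNReal.ofReal_mul hp.le]
  congr 1
  have hlog : (fun i => Real.log (Real.exp (y i))) = y := funext fun i => Real.log_exp _
  rw [hlog, Finset.prod_inv_distrib]
  field_simp

lemma hr_diverge {d : ℕ} (Q : Matrix (Fin d) (Fin d) ℝ) (l : Fin d → ℝ)
    (hsymm : Q.IsSymm) (w : Fin d → ℝ) (i₀ : Fin d) (hw : 0 < w i₀)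
    (hcase : (w ⬝ᵥ Q.mulVec w < 0) ∨ (Q.mulVec w = 0 ∧ 0 ≤ l ⬝ᵥ w)) :
    ∫⁻ y in {y : Fin d → ℝ | ¬ ∀ i, y i ≤ 0},
      ENNReal.ofReal (Real.exp (-(1/2) * (y ⬝ᵥ Q.mulVec y) + l ⬝ᵥ y)) = ⊤ := by
  set F : (Fin d → ℝ) → ℝ := fun y => -(1/2) * (y ⬝ᵥ Q.mulVec y) + l ⬝ᵥ y with hF
  set ε : ℝ := w i₀ with hε
  -- symmetry of the bilinear form
  have hdsymm : ∀ a b : Fin d → ℝ, a ⬝ᵥ Q.mulVec b = b ⬝ᵥ Q.mulVec a := by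
    intro a b
    rw [Matrix.dotProduct_mulVec, ← Matrix.mulVec_transpose, hsymm.eq, dotProduct_comm]
  -- expansion of F along the tube
  have hexp : ∀ (t : ℝ) (u : Fin d → ℝ),
      F (t • w + u) = (1/2) * t^2 * (-(w ⬝ᵥ Q.mulVec w))
        + t * ((l ⬝ᵥ w) - (w ⬝ᵥ Q.mulVec u)) + F u := by
    intro t u
    have h1 : u ⬝ᵥ Q.mulVec w = w ⬝ᵥ Q.mulVec u := hdsymm u w
    simp only [hF, Matrix.mulVec_add, Matrix.mulVec_smul, dotProduct_add,
      add_dotProduct, dotProduct_smul, smul_dotProduct, smul_eq_mul, h1]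
    ring
  -- continuity facts
  have hcQ : Continuous fun u : Fin d → ℝ => u ⬝ᵥ Q.mulVec u := by
    simp only [dotProduct, Matrix.mulVec]
    exact continuous_finset_sum _ fun i _ => (continuous_apply i).mul
      (continuous_finset_sum _ fun j _ => continuous_const.mul (continuous_apply j))
  have hcl : ∀ a : Fin d → ℝ, Continuous fun u : Fin d → ℝ => a ⬝ᵥ u := by
    intro a
    simp only [dotProduct]
    exact continuous_finset_sum _ fun i _ => continuous_const.mul (continuous_apply i)
  have hcF : Continuous F := by
    exact (continuous_const.mul hcQ).add (hcl l)
  have hcwQ : Continuous fun u : Fin d → ℝ => w ⬝ᵥ Q.mulVec u := by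
    simp only [dotProduct, Matrix.mulVec]
    exact continuous_finset_sum _ fun i _ => continuous_const.mul
      (continuous_finset_sum _ fun j _ => continuous_const.mul (continuous_apply j))
  -- the compact box
  set K : Set (Fin d → ℝ) := Set.univ.pi fun _ => Set.Icc (0:ℝ) ε with hK
  have hKc : IsCompact K := isCompact_univ_pi fun _ => isCompact_Icc
  have hKne : K.Nonempty := ⟨0, by
    intro i _
    exact ⟨le_refl 0, hw.le⟩⟩
  obtain ⟨u₀, hu₀, hmin⟩ := hKc.exists_isMinOn hKne hcF.continuousOn
  obtain ⟨u₁, hu₁, hmax⟩ := hKc.exists_isMaxOn hKne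
    (continuous_abs.comp ((continuous_const.sub hcwQ))).continuousOn
  set C : ℝ := |l ⬝ᵥ w - w ⬝ᵥ Q.mulVec u₁| with hC
  have hC0 : 0 ≤ C := abs_nonneg _
  -- the uniform lower bound
  have hbound : ∃ M : ℝ, ∀ t : ℝ, 0 ≤ t → ∀ u ∈ K, M ≤ F (t • w + u) := by
    rcases hcase with hneg | ⟨hQw, hlw⟩
    · set a : ℝ := -(w ⬝ᵥ Q.mulVec w) with ha
      have ha0 : 0 < a := by simpa [ha] using hneg
      refine ⟨-(C^2 / (2*a)) + F u₀, fun t ht u hu => ?_⟩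
      rw [hexp]
      have h1 : F u₀ ≤ F u := hmin hu
      have h2 : |l ⬝ᵥ w - w ⬝ᵥ Q.mulVec u| ≤ C := hmax hu
      have h3 : -C ≤ l ⬝ᵥ w - w ⬝ᵥ Q.mulVec u := (abs_le.1 h2).1
      have h4 : -(C^2/(2*a)) ≤ (1/2)*t^2*a + t * (l ⬝ᵥ w - w ⬝ᵥ Q.mulVec u) := by
        have key : 0 ≤ (1/2)*t^2*a - C * t + C^2/(2*a) := by
          have h5 : 0 ≤ (a*t - C)^2 := sq_nonneg _
          have h6 : (1/2)*t^2*a - C*t + C^2/(2*a) = (a*t - C)^2 / (2*a) := by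
            field_simp
            ring
          rw [h6]
          positivity
        nlinarith [mul_le_mul_of_nonneg_left h3 ht]
      have := add_le_add h4 h1
      linarith [this]
    · refine ⟨F u₀, fun t ht u hu => ?_⟩
      have e1 : w ⬝ᵥ Q.mulVec w = 0 := by rw [hQw]; exact dotProduct_zero w
      have e2 : w ⬝ᵥ Q.mulVec u = 0 := by rw [hdsymm w u, hQw]; exact dotProduct_zero u
      rw [hexp, e1, e2]
      simp only [neg_zero, mul_zero, zero_add, sub_zero]
      have h1 : F u₀ ≤ F u := hmin hu
      have h2 : 0 ≤ t * (l ⬝ᵥ w) := mul_nonneg ht hlw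
      linarith
  obtain ⟨M, hM⟩ := hbound
  have hw' : 0 < w i₀ := hε ▸ hw
  set A : ℕ → Set (Fin d → ℝ) := fun n =>
    Set.univ.pi fun i => Set.Ico (((n:ℝ)+1) * w i) (((n:ℝ)+1) * w i + ε) with hA
  have hAmeas : ∀ n, MeasurableSet (A n) := fun n =>
    MeasurableSet.univ_pi fun i => measurableSet_Ico
  have hAvol : ∀ n, volume (A n) = ENNReal.ofReal ε ^ d := by
    intro n
    rw [hA]
    simp only []
    rw [volume_pi_pi]
    have he : ∀ i : Fin d, ((n:ℝ)+1) * w i + ε - ((n:ℝ)+1) * w i = ε := fun i => by ring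
    simp [Real.volume_Ico, he, Finset.prod_const, Finset.card_univ]
  have hAsub : ∀ n, A n ⊆ {y : Fin d → ℝ | ¬ ∀ i, y i ≤ 0} := by
    intro n y hy hall
    have h := hy i₀ (Set.mem_univ i₀)
    have h2 := hall i₀
    have hn : (0:ℝ) ≤ (n:ℝ) := Nat.cast_nonneg n
    nlinarith [h.1]
  have hAdisj : Pairwise (Function.onFun Disjoint A) := by
    intro n m hnm
    simp only [Function.onFun, Set.disjoint_left]
    intro y hyn hym
    have h1 := hyn i₀ (Set.mem_univ i₀)
    have h2 := hym i₀ (Set.mem_univ i₀)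
    have hεw : ε ≤ w i₀ := le_of_eq hε
    rcases lt_or_gt_of_ne hnm with h | h
    · have hc : (n:ℝ) + 1 ≤ (m:ℝ) := by exact_mod_cast Nat.succ_le_of_lt h
      nlinarith [h1.1, h1.2, h2.1, h2.2]
    · have hc : (m:ℝ) + 1 ≤ (n:ℝ) := by exact_mod_cast Nat.succ_le_of_lt h
      nlinarith [h1.1, h1.2, h2.1, h2.2]
  have hAbound : ∀ n, ∀ y ∈ A n, M ≤ F y := by
    intro n y hy
    have hmem : (fun i => y i - ((n:ℝ)+1) * w i) ∈ K := by
      intro i _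
      have h := hy i (Set.mem_univ i)
      have h1 : ((n:ℝ)+1) * w i ≤ y i := h.1
      have h2 : y i < ((n:ℝ)+1) * w i + ε := h.2
      constructor
      · show 0 ≤ y i - ((n:ℝ)+1) * w i
        linarith
      · show y i - ((n:ℝ)+1) * w i ≤ ε
        linarith
    have := hM ((n:ℝ)+1) (by positivity) _ hmem
    have heq : ((n:ℝ)+1) • w + (fun i => y i - ((n:ℝ)+1) * w i) = y := by
      funext i
      simp [Pi.add_apply, Pi.smul_apply, smul_eq_mul]
    rwa [heq] at this
  have hU : MeasurableSet (⋃ n, A n) := MeasurableSet.iUnion hAmeas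
  have hUvol : volume (⋃ n, A n) = ⊤ := by
    rw [measure_iUnion hAdisj hAmeas]
    simp only [hAvol]
    exact ENNReal.tsum_const_eq_top_of_ne_zero
      (pow_ne_zero d (ENNReal.ofReal_pos.2 hw).ne')
  have hle : ENNReal.ofReal (Real.exp M) * volume (⋃ n, A n)
      ≤ ∫⁻ y in {y : Fin d → ℝ | ¬ ∀ i, y i ≤ 0}, ENNReal.ofReal (Real.exp (F y)) := by
    refine le_trans ?_ (lintegral_mono_set (Set.iUnion_subset hAsub))
    rw [← setLIntegral_const]
    apply setLIntegral_mono' hU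
    intro y hy
    obtain ⟨n, hn⟩ := Set.mem_iUnion.1 hy
    exact ENNReal.ofReal_le_ofReal (Real.exp_le_exp.2 (hAbound n y hn))
  rw [hUvol, ENNReal.mul_top (by simp [Real.exp_pos, (Real.exp_pos M).ne'] :
    ENNReal.ofReal (Real.exp M) ≠ 0)] at hle
  exact top_le_iff.1 hle

lemma hr_key {d : ℕ} (Q : Matrix (Fin d) (Fin d) ℝ) (l : Fin d → ℝ)
    (hsymm : Q.IsSymm)
    (hfin : ∫⁻ z in {z : Fin d → ℝ | (∀ i, 0 < z i) ∧ ¬ ∀ i, z i ≤ 1},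
        ENNReal.ofReal
          (Real.exp (-(1 / 2) *
              ((fun i => Real.log (z i)) ⬝ᵥ Q.mulVec fun i => Real.log (z i)) +
              l ⬝ᵥ fun i => Real.log (z i)) *
            ∏ i, (z i)⁻¹) < ⊤)
    (w : Fin d → ℝ) (i₀ : Fin d) (hw : 0 < w i₀)
    (hcase : (w ⬝ᵥ Q.mulVec w < 0) ∨ (Q.mulVec w = 0 ∧ 0 ≤ l ⬝ᵥ w)) : False := by
  have h1 : (∫⁻ z in {z : Fin d → ℝ | (∀ i, 0 < z i) ∧ ¬ ∀ i, z i ≤ 1},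
      ENNReal.ofReal
        (Real.exp (-(1 / 2) *
            ((fun i => Real.log (z i)) ⬝ᵥ Q.mulVec fun i => Real.log (z i)) +
            l ⬝ᵥ fun i => Real.log (z i)) *
          ∏ i, (z i)⁻¹))
      = ∫⁻ y in {y : Fin d → ℝ | ¬ ∀ i, y i ≤ 0},
        ENNReal.ofReal (Real.exp (-(1/2) * (y ⬝ᵥ Q.mulVec y) + l ⬝ᵥ y)) :=
    hr_cov (fun y => -(1/2) * (y ⬝ᵥ Q.mulVec y) + l ⬝ᵥ y)
  rw [h1, hr_diverge Q l hsymm w i₀ hw hcase] at hfin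
  exact absurd hfin (lt_irrefl ⊤)

/-- Converse: if `Q` is symmetric with `Q 1_d = 0` and the Hüsler-Reiss Pareto
integral is finite, then `Q` is positive definite on the orthogonal complement of
`1_d` (so `Ker Q = span(1_d)`) and `lᵀ 1_d < 0`. -/
theorem hr_pareto_normalizing_constant_finite_converse
    {d : ℕ} (hd : 2 ≤ d)
    (Q : Matrix (Fin d) (Fin d) ℝ) (l : Fin d → ℝ)
    (hsymm : Q.IsSymm) (hker1 : Q.mulVec (fun _ => 1) = 0)
    (hfin : ∫⁻ z in {z : Fin d → ℝ | (∀ i, 0 < z i) ∧ ¬ ∀ i, z i ≤ 1},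
        ENNReal.ofReal
          (Real.exp (-(1 / 2) *
              ((fun i => Real.log (z i)) ⬝ᵥ Q.mulVec fun i => Real.log (z i)) +
              l ⬝ᵥ fun i => Real.log (z i)) *
            ∏ i, (z i)⁻¹) < ⊤) :
    (∀ v : Fin d → ℝ, v ≠ 0 → ∑ i, v i = 0 → 0 < v ⬝ᵥ Q.mulVec v) ∧
      ∑ i, l i < 0 := by
  have hdsymm : ∀ a b : Fin d → ℝ, a ⬝ᵥ Q.mulVec b = b ⬝ᵥ Q.mulVec a := by
    intro a b
    rw [Matrix.dotProduct_mulVec, ← Matrix.mulVec_transpose, hsymm.eq, dotProduct_comm]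
  -- second component first
  have hl2 : ∑ i, l i < 0 := by
    by_contra h
    push_neg at h
    refine hr_key Q l hsymm hfin (fun _ => 1) ⟨0, by omega⟩ one_pos (Or.inr ⟨hker1, ?_⟩)
    simpa [dotProduct] using h
  refine ⟨?_, hl2⟩
  intro v hv hsum
  by_contra hq
  push_neg at hq
  -- helper: from a vector with nonneg quadratic form pick sign with positive coord
  have hpick : ∀ x : Fin d → ℝ, x ≠ 0 →
      (x ⬝ᵥ Q.mulVec x < 0 ∨ (Q.mulVec x = 0 ∧ l ⬝ᵥ x = 0)) → False := by
    intro x hx hcx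
    have hxne : ∃ i, x i ≠ 0 := Function.ne_iff.1 hx
    obtain ⟨i, hi⟩ := hxne
    rcases hi.lt_or_gt with hneg | hpos
    · -- use -x
      refine hr_key Q l hsymm hfin (-x) i (by simpa using hneg) ?_
      rcases hcx with hc | ⟨hc1, hc2⟩
      · left
        have : (-x) ⬝ᵥ Q.mulVec (-x) = x ⬝ᵥ Q.mulVec x := by
          rw [Matrix.mulVec_neg, neg_dotProduct, dotProduct_neg, neg_neg]
        rwa [this]
      · right
        constructor
        · rw [Matrix.mulVec_neg, hc1, neg_zero]
        · rw [dotProduct_neg, hc2, neg_zero]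
    · refine hr_key Q l hsymm hfin x i hpos ?_
      rcases hcx with hc | ⟨hc1, hc2⟩
      · exact Or.inl hc
      · exact Or.inr ⟨hc1, le_of_eq hc2.symm⟩
  rcases hq.lt_or_eq with hqlt | hqeq
  · -- strictly negative quadratic form: use v directly (flip as needed)
    exact hpick v hv (Or.inl hqlt)
  · -- v ⬝ᵥ Q v = 0
    rcases eq_or_ne (Q.mulVec v) 0 with hQv | hQv
    · -- kernel case : w = v + c • 1 with l ⬝ᵥ w = 0
      set c : ℝ := -(l ⬝ᵥ v) / (∑ i, l i) with hc
      set w : Fin d → ℝ := v + c • (fun _ : Fin d => (1:ℝ)) with hwdef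
      have hQw : Q.mulVec w = 0 := by
        rw [hwdef, Matrix.mulVec_add, Matrix.mulVec_smul, hQv, hker1, smul_zero, add_zero]
      have hlw : l ⬝ᵥ w = 0 := by
        rw [hwdef, dotProduct_add, dotProduct_smul]
        have h1 : l ⬝ᵥ (fun _ => 1 : Fin d → ℝ) = ∑ i, l i := by
          simp [dotProduct]
        rw [h1, smul_eq_mul, hc]
        have hne : (∑ i, l i) ≠ 0 := ne_of_lt hl2
        field_simp
        ring
      have hwne : w ≠ 0 := by
        intro h0
        apply hv
        have hveq : v = -(c • (fun _ => 1 : Fin d → ℝ)) := by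
          have := h0
          rw [hwdef] at this
          funext i
          have := congrFun this i
          simp at this ⊢
          linarith
        have hsum' : ∑ i, v i = -(c * d) := by
          rw [hveq]
          simp [Finset.sum_const, Finset.card_univ, mul_comm]
        have hc0 : c = 0 := by
          rw [hsum] at hsum'
          have hd0 : (0:ℝ) < d := by
            have : 0 < d := by omega
            exact_mod_cast this
          have : c * d = 0 := by linarith
          rcases mul_eq_zero.1 this with h | h
          · exact h
          · exact absurd h hd0.ne'
        rw [hveq, hc0]
        simp
      exact hpick w hwne (Or.inr ⟨hQw, hlw⟩)
    · -- Qv ≠ 0 : perturb to get strictly negative quadratic form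
      set qv : Fin d → ℝ := Q.mulVec v with hqv
      have hb : 0 < qv ⬝ᵥ qv := by
        have hnn : 0 ≤ qv ⬝ᵥ qv := Finset.sum_nonneg fun i _ => mul_self_nonneg _
        have hne : qv ⬝ᵥ qv ≠ 0 := fun h => hQv (dotProduct_self_eq_zero.1 h)
        exact lt_of_le_of_ne hnn (Ne.symm hne)
      have hvQqv : v ⬝ᵥ Q.mulVec qv = qv ⬝ᵥ qv := by
        rw [hdsymm v qv, ← hqv]
      set e : ℝ := qv ⬝ᵥ Q.mulVec qv with he
      have hkey : ∀ s : ℝ, (v - s • qv) ⬝ᵥ Q.mulVec (v - s • qv)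
          = -(2*s) * (qv ⬝ᵥ qv) + s^2 * e := by
        intro s
        have h2 : qv ⬝ᵥ Q.mulVec v = qv ⬝ᵥ qv := by rw [← hqv]
        have h0 : v ⬝ᵥ Q.mulVec v = 0 := hqeq
        simp only [Matrix.mulVec_sub, Matrix.mulVec_smul, dotProduct_sub,
          sub_dotProduct, dotProduct_smul, smul_dotProduct, smul_eq_mul,
          hvQqv, h2, h0, he]
        try ring
      obtain ⟨s, hs0, hsneg⟩ : ∃ s : ℝ, 0 < s ∧ -(2*s) * (qv ⬝ᵥ qv) + s^2 * e < 0 := by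
        rcases le_or_gt e 0 with hle | hlt
        · refine ⟨1, one_pos, ?_⟩
          nlinarith
        · refine ⟨(qv ⬝ᵥ qv) / e, div_pos hb hlt, ?_⟩
          have : -(2 * ((qv ⬝ᵥ qv)/e)) * (qv ⬝ᵥ qv) + ((qv ⬝ᵥ qv)/e)^2 * e
              = -((qv ⬝ᵥ qv)^2 / e) := by
            field_simp
            ring
          rw [this]
          have : 0 < (qv ⬝ᵥ qv)^2 / e := by positivity
          linarith
      have hwQw : (v - s • qv) ⬝ᵥ Q.mulVec (v - s • qv) < 0 := by
        rw [hkey s]; exact hsneg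
      have hwne : v - s • qv ≠ 0 := by
        intro h0
        rw [h0] at hwQw
        simp [zero_dotProduct] at hwQw
      exact hpick (v - s • qv) hwne (Or.inl hwQw)
end

section
/- Let Z have Hüsler-Reiss Pareto distribution HRPar_a(Q,l) with density f_a(z;Q,l) = C_a(Q,l)^{-1} exp(-½ (log z)ᵀQ(log z) + lᵀ log z) (∏ z_i^{-1}) 1_{z ≰ a}. Then for any u ∈ (0,∞)^d, the vector uZ (coordinatewise product) has distribution HRPar_{ua}(Q, l + Q log u), and the normalizing constants satisfy C_{ua}(Q, l + Q log u) = exp( ½ (log u)ᵀ Q (log u) + lᵀ log u ) C_a(Q,l). -/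
open MeasureTheory Matrix
open scoped ENNReal

/-- Unnormalized Hüsler-Reiss Pareto density on `{z > 0 : z ≰ a}`. -/
noncomputable def hrDens {d : ℕ} (Q : Matrix (Fin d) (Fin d) ℝ) (l a : Fin d → ℝ)
    (z : Fin d → ℝ) : ℝ :=
  if (∀ i, 0 < z i) ∧ ¬ ∀ i, z i ≤ a i then
    Real.exp (-(1 / 2) *
        ((fun i => Real.log (z i)) ⬝ᵥ Q.mulVec fun i => Real.log (z i)) +
        l ⬝ᵥ fun i => Real.log (z i)) * ∏ i, (z i)⁻¹
  else 0

/-- Hüsler-Reiss Pareto normalizing constant `C_a(Q,l)`. -/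
noncomputable def hrC {d : ℕ} (Q : Matrix (Fin d) (Fin d) ℝ) (l a : Fin d → ℝ) : ℝ :=
  ∫ z, hrDens Q l a z

section Aux

variable {d : ℕ}

lemma measurable_hrDens (Q : Matrix (Fin d) (Fin d) ℝ) (l a : Fin d → ℝ) :
    Measurable (hrDens Q l a) := by
  unfold hrDens
  have hset : MeasurableSet {z : Fin d → ℝ | (∀ i, 0 < z i) ∧ ¬ ∀ i, z i ≤ a i} := by
    have heq : {z : Fin d → ℝ | (∀ i, 0 < z i) ∧ ¬ ∀ i, z i ≤ a i}
        = (⋂ i, {z : Fin d → ℝ | 0 < z i}) ∩ (⋂ i, {z : Fin d → ℝ | z i ≤ a i})ᶜ := by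
      ext z; simp
    rw [heq]
    exact (MeasurableSet.iInter fun i =>
        measurableSet_lt measurable_const (measurable_pi_apply i)).inter
      (MeasurableSet.iInter fun i =>
        measurableSet_le (measurable_pi_apply i) measurable_const).compl
  apply Measurable.ite hset _ measurable_const
  apply Measurable.mul
  · apply Real.measurable_exp.comp
    apply Measurable.add
    · apply Measurable.const_mul
      unfold dotProduct Matrix.mulVec
      apply Finset.measurable_sum
      intro i _
      apply Measurable.mul
      · exact Real.measurable_log.comp (measurable_pi_apply i)
      · unfold dotProduct
        apply Finset.measurable_sum
        intro j _
        exact (Real.measurable_log.comp (measurable_pi_apply j)).const_mul _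
    · unfold dotProduct
      apply Finset.measurable_sum
      intro i _
      exact (Real.measurable_log.comp (measurable_pi_apply i)).const_mul _
  · apply Finset.measurable_prod
    intro i _
    exact (measurable_pi_apply i).inv

lemma dotProduct_mulVec_symm {Q : Matrix (Fin d) (Fin d) ℝ} (hQ : Q.PosSemidef)
    (x y : Fin d → ℝ) : x ⬝ᵥ Q.mulVec y = y ⬝ᵥ Q.mulVec x := by
  have hQt : Qᵀ = Q := by
    have := hQ.1
    rwa [Matrix.IsHermitian, Matrix.conjTranspose_eq_transpose_of_trivial] at this
  rw [Matrix.dotProduct_mulVec, ← Matrix.mulVec_transpose, hQt, dotProduct_comm]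

lemma hrDens_scale (Q : Matrix (Fin d) (Fin d) ℝ) (hQ : Q.PosSemidef)
    (l a u : Fin d → ℝ) (hu : ∀ i, 0 < u i) (z : Fin d → ℝ) :
    hrDens Q (l + Q.mulVec fun i => Real.log (u i)) (fun i => u i * a i)
        (fun i => u i * z i)
      = Real.exp ((1 / 2) *
          ((fun i => Real.log (u i)) ⬝ᵥ Q.mulVec fun i => Real.log (u i)) +
          l ⬝ᵥ fun i => Real.log (u i)) * (∏ i, (u i)⁻¹) * hrDens Q l a z := by
  set v : Fin d → ℝ := fun i => Real.log (u i) with hv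
  set s : Fin d → ℝ := fun i => Real.log (z i) with hs
  unfold hrDens
  have hcond : ((∀ i, 0 < u i * z i) ∧ ¬ ∀ i, u i * z i ≤ u i * a i)
      ↔ ((∀ i, 0 < z i) ∧ ¬ ∀ i, z i ≤ a i) := by
    constructor
    · rintro ⟨h1, h2⟩
      exact ⟨fun i => by nlinarith [h1 i, hu i, mul_pos (hu i) (hu i)], fun h => h2 fun i =>
        (mul_le_mul_iff_of_pos_left (hu i)).2 (h i)⟩
    · rintro ⟨h1, h2⟩
      exact ⟨fun i => mul_pos (hu i) (h1 i), fun h => h2 fun i =>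
        (mul_le_mul_iff_of_pos_left (hu i)).1 (h i)⟩
  rw [if_congr hcond rfl rfl]
  split_ifs with h
  · have hz := h.1
    have hlog : (fun i => Real.log (u i * z i)) = v + s := by
      funext i
      simp [hv, hs, Real.log_mul (ne_of_gt (hu i)) (ne_of_gt (hz i))]
    rw [hlog]
    have hexp : -(1 / 2) * ((v + s) ⬝ᵥ Q.mulVec (v + s)) + (l + Q.mulVec v) ⬝ᵥ (v + s)
        = ((1 / 2) * (v ⬝ᵥ Q.mulVec v) + l ⬝ᵥ v)
          + (-(1 / 2) * (s ⬝ᵥ Q.mulVec s) + l ⬝ᵥ s) := by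
      simp only [Matrix.mulVec_add, add_dotProduct, dotProduct_add]
      rw [dotProduct_mulVec_symm hQ s v, dotProduct_comm (Q.mulVec v) v,
        dotProduct_comm (Q.mulVec v) s, dotProduct_mulVec_symm hQ s v]
      ring
    have hprod : (∏ i, (u i * z i)⁻¹) = (∏ i, (u i)⁻¹) * ∏ i, (z i)⁻¹ := by
      rw [← Finset.prod_mul_distrib]
      exact Finset.prod_congr rfl fun i _ => mul_inv _ _
    rw [hexp, hprod, Real.exp_add]
    ring
  · simp

lemma map_scale_volume (u : Fin d → ℝ) (hu : ∀ i, 0 < u i) :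
    Measure.map (fun z : Fin d → ℝ => fun i => u i * z i) volume
      = ENNReal.ofReal (∏ i, (u i)⁻¹) • volume := by
  have hfun : (fun z : Fin d → ℝ => fun i => u i * z i)
      = ⇑(Matrix.toLin' (Matrix.diagonal u)) := by
    funext z
    funext i
    simp [Matrix.toLin'_apply, Matrix.mulVec_diagonal]
  have hdet : LinearMap.det (Matrix.toLin' (Matrix.diagonal u)) = ∏ i, u i := by
    rw [LinearMap.det_toLin', Matrix.det_diagonal]
  have hne : LinearMap.det (Matrix.toLin' (Matrix.diagonal u)) ≠ 0 := by
    rw [hdet]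
    exact (Finset.prod_pos fun i _ => hu i).ne'
  rw [hfun, Real.map_linearMap_volume_pi_eq_smul_volume_pi hne, hdet]
  congr 1
  have hp : (0:ℝ) < ∏ i, u i := Finset.prod_pos fun i _ => hu i
  rw [abs_of_pos (inv_pos.2 hp), ← Finset.prod_inv_distrib]

lemma map_withDensity_equiv {α β : Type*} [MeasurableSpace α] [MeasurableSpace β]
    (e : α ≃ᵐ β) (μ : Measure α) (f : β → ℝ≥0∞) (hf : Measurable f) :
    Measure.map e (μ.withDensity (f ∘ e)) = (Measure.map e μ).withDensity f := by
  ext s hs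
  rw [Measure.map_apply e.measurable hs, withDensity_apply _ (e.measurable hs),
    withDensity_apply _ hs, setLIntegral_map hs hf e.measurable]
  rfl

end Aux

/-- If `Z ~ HRPar_a(Q,l)` then `uZ ~ HRPar_{ua}(Q, l + Q log u)`, and
`C_{ua}(Q, l + Q log u) = exp(½ (log u)ᵀQ(log u) + lᵀ log u) C_a(Q,l)`. -/
theorem hr_pareto_scale_transform
    {Ω : Type*} [MeasurableSpace Ω] (μ : Measure Ω) [IsProbabilityMeasure μ]
    {d : ℕ} (hd : 2 ≤ d)
    (Q : Matrix (Fin d) (Fin d) ℝ) (l a : Fin d → ℝ)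
    (hQ : Q.PosSemidef)
    (hker : ∀ v : Fin d → ℝ, Q.mulVec v = 0 ↔ ∃ c : ℝ, v = fun _ => c)
    (hl : ∑ i, l i < 0) (ha : ∀ i, 0 < a i)
    (Z : Ω → Fin d → ℝ) (hZ : Measurable Z)
    (hdist : Measure.map Z μ =
      volume.withDensity fun z => ENNReal.ofReal ((hrC Q l a)⁻¹ * hrDens Q l a z))
    (u : Fin d → ℝ) (hu : ∀ i, 0 < u i) :
    (Measure.map (fun ω i => u i * Z ω i) μ =
      volume.withDensity fun z => ENNReal.ofReal
        ((hrC Q (l + Q.mulVec fun i => Real.log (u i)) (fun i => u i * a i))⁻¹ *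
          hrDens Q (l + Q.mulVec fun i => Real.log (u i)) (fun i => u i * a i) z)) ∧
    hrC Q (l + Q.mulVec fun i => Real.log (u i)) (fun i => u i * a i) =
      Real.exp ((1 / 2) *
          ((fun i => Real.log (u i)) ⬝ᵥ Q.mulVec fun i => Real.log (u i)) +
          l ⬝ᵥ fun i => Real.log (u i)) * hrC Q l a := by
  set v : Fin d → ℝ := fun i => Real.log (u i) with hv
  set E : ℝ := Real.exp ((1 / 2) * (v ⬝ᵥ Q.mulVec v) + l ⬝ᵥ v) with hE
  set l' : Fin d → ℝ := l + Q.mulVec v with hl'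
  set a' : Fin d → ℝ := fun i => u i * a i with ha'
  -- the scaling measurable equivalence
  let e : (Fin d → ℝ) ≃ᵐ (Fin d → ℝ) :=
    MeasurableEquiv.piCongrRight fun i =>
      (Homeomorph.mulLeft₀ (u i) (hu i).ne').toMeasurableEquiv
  have he : ⇑e = fun z i => u i * z i := rfl
  have hPu : (0:ℝ) < ∏ i, (u i)⁻¹ := Finset.prod_pos fun i _ => inv_pos.2 (hu i)
  have hmapvol : Measure.map e volume = ENNReal.ofReal (∏ i, (u i)⁻¹) • volume := by
    rw [he]; exact map_scale_volume u hu
  -- Part 2: normalizing constant identity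
  have hC : hrC Q l' a' = E * hrC Q l a := by
    have h1 : ∫ z, hrDens Q l' a' z ∂(Measure.map e volume)
        = ∫ z, hrDens Q l' a' (e z) := integral_map_equiv e _
    rw [hmapvol, integral_smul_measure] at h1
    have h2 : ∫ z, hrDens Q l' a' (e z)
        = ∫ z, E * (∏ i, (u i)⁻¹) * hrDens Q l a z := by
      congr 1
      funext z
      rw [he]
      exact hrDens_scale Q hQ l a u hu z
    rw [h2, integral_const_mul] at h1
    have h3 : (ENNReal.ofReal (∏ i, (u i)⁻¹)).toReal = ∏ i, (u i)⁻¹ :=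
      ENNReal.toReal_ofReal hPu.le
    rw [h3] at h1
    rw [smul_eq_mul] at h1
    have h4 : (∏ i, (u i)⁻¹) * hrC Q l' a' = (∏ i, (u i)⁻¹) * (E * hrC Q l a) := by
      unfold hrC
      rw [h1]; ring
    exact mul_left_cancel₀ hPu.ne' h4
  refine ⟨?_, hC⟩
  -- Part 1
  have hcomp : (fun ω i => u i * Z ω i) = ⇑e ∘ Z := rfl
  rw [hcomp, ← Measure.map_map e.measurable hZ, hdist]
  set g₀ : (Fin d → ℝ) → ℝ≥0∞ :=
    fun z => ENNReal.ofReal ((hrC Q l a)⁻¹ * hrDens Q l a z) with hg₀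
  have hg₀m : Measurable g₀ := by
    apply Measurable.ennreal_ofReal
    exact (measurable_hrDens Q l a).const_mul _
  have hfe : (g₀ ∘ ⇑e.symm) ∘ ⇑e = g₀ := by
    funext x
    simp [Function.comp]
  rw [show volume.withDensity g₀ = volume.withDensity ((g₀ ∘ ⇑e.symm) ∘ ⇑e) by rw [hfe],
    map_withDensity_equiv e volume (g₀ ∘ ⇑e.symm) (hg₀m.comp e.symm.measurable),
    hmapvol, withDensity_smul_measure]
  rw [← withDensity_smul' _ _ ENNReal.ofReal_ne_top]
  congr 1
  funext z
  have hz' : (fun i => u i * e.symm z i) = z := by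
    have := e.apply_symm_apply z
    rw [he] at this
    exact this
  have hD : hrDens Q l' a' z = E * (∏ i, (u i)⁻¹) * hrDens Q l a (e.symm z) := by
    conv_lhs => rw [← hz']
    exact hrDens_scale Q hQ l a u hu (e.symm z)
  rw [Pi.smul_apply, smul_eq_mul, hD, hC, mul_inv]
  have hEne : E ≠ 0 := Real.exp_ne_zero _
  rw [show E⁻¹ * (hrC Q l a)⁻¹ * (E * (∏ i, (u i)⁻¹) * hrDens Q l a (e.symm z))
      = (E⁻¹ * E) * ((∏ i, (u i)⁻¹) * ((hrC Q l a)⁻¹ * hrDens Q l a (e.symm z))) by ring,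
    inv_mul_cancel₀ hEne, one_mul]
  rw [ENNReal.ofReal_mul hPu.le]
  rfl
end
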